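/- arXiv:2102.09477 — 8 statements merged into one kernel-verified Lean document; each statement's English description precedes it below -/
import Mathlib

section
/- Let S ⊆ E be a closed set such that reach(S, x) > 0 for every x ∈ S, i.e. every point of S has a ball around it all of whose points have a unique nearest point in S. Then S is locally connected. -/
open Filter Topology Metric Set

variable {E : Type*} [NormedAddCommGroup E] [InnerProductSpace ℝ E]

/-- `z` has a unique nearest point in `S`. -/
def HasUniqueNearestPoint (S : Set E) (z : E) : Prop :=
  ∃! s : E, s ∈ S ∧ dist z s = infDist z S

open Classical in
/-- The nearest-point projection onto `S` (junk value `z` if no nearest point exists). -/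
noncomputable def nproj (S : Set E) (z : E) : E :=
  if h : ∃ s : E, s ∈ S ∧ dist z s = infDist z S then h.choose else z

lemma nproj_spec {S : Set E} {z : E} (hz : HasUniqueNearestPoint S z) :
    nproj S z ∈ S ∧ dist z (nproj S z) = infDist z S := by
  rw [nproj, dif_pos hz.exists]
  exact hz.exists.choose_spec

lemma eq_nproj_of {S : Set E} {z s : E} (hz : HasUniqueNearestPoint S z)
    (h1 : s ∈ S) (h2 : dist z s = infDist z S) : s = nproj S z :=
  hz.unique ⟨h1, h2⟩ (nproj_spec hz)

lemma nproj_mem_of_self {S : Set E} {y : E} (hy : HasUniqueNearestPoint S y) (hyS : y ∈ S) :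
    nproj S y = y :=
  (eq_nproj_of hy hyS (by rw [dist_self, infDist_zero_of_mem hyS])).symm

lemma continuousOn_nproj [FiniteDimensional ℝ E] {S : Set E} (hS : IsClosed S)
    {x : E} {r : ℝ} (h : ∀ z ∈ ball x r, HasUniqueNearestPoint S z) :
    ContinuousOn (nproj S) (ball x r) := by
  intro z₀ hz₀
  have hz₀' := h z₀ hz₀
  have hspec₀ := nproj_spec hz₀'
  rw [ContinuousWithinAt]
  apply tendsto_of_subseq_tendsto
  intro u hu
  rw [tendsto_nhdsWithin_iff] at hu
  obtain ⟨hu1, hu2⟩ := hu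
  -- eventually the projected sequence lies in a fixed bounded subset of S
  have hev : ∀ᶠ n in atTop, u n ∈ ball x r ∧ dist (u n) z₀ ≤ 1 :=
    hu2.and (hu1.eventually (Metric.closedBall_mem_nhds z₀ one_pos))
  set B : Set E := S ∩ closedBall z₀ (infDist z₀ S + 2) with hB
  have hevB : ∀ᶠ n in atTop, nproj S (u n) ∈ B := by
    filter_upwards [hev] with n hn
    have hn' := h (u n) hn.1
    have hsp := nproj_spec hn'
    refine ⟨hsp.1, ?_⟩
    rw [mem_closedBall]
    calc dist (nproj S (u n)) z₀ ≤ dist (nproj S (u n)) (u n) + dist (u n) z₀ :=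
          dist_triangle _ _ _
      _ = infDist (u n) S + dist (u n) z₀ := by rw [dist_comm, hsp.2]
      _ ≤ (infDist z₀ S + dist (u n) z₀) + dist (u n) z₀ := by
          have := infDist_le_infDist_add_dist (x := u n) (y := z₀) (s := S)
          linarith
      _ ≤ infDist z₀ S + 2 := by linarith [hn.2]
  have hBbdd : Bornology.IsBounded B := (isBounded_closedBall).subset inter_subset_right
  obtain ⟨a, haB, φ, hφ, haT⟩ :=
    tendsto_subseq_of_frequently_bounded hBbdd hevB.frequently
  have haS : a ∈ S :=
    hS.closure_subset_iff.mpr inter_subset_left haB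
  have hφt : Tendsto φ atTop atTop := hφ.tendsto_atTop
  have huφ : Tendsto (fun n => u (φ n)) atTop (𝓝 z₀) := hu1.comp hφt
  -- the limit a is a nearest point of z₀
  have hda : dist z₀ a = infDist z₀ S := by
    have t1 : Tendsto (fun n => dist (u (φ n)) (nproj S (u (φ n)))) atTop (𝓝 (dist z₀ a)) :=
      huφ.dist haT
    have t2 : Tendsto (fun n => infDist (u (φ n)) S) atTop (𝓝 (infDist z₀ S)) :=
      ((continuous_infDist_pt S).tendsto z₀).comp huφ
    refine tendsto_nhds_unique (t1.congr' ?_) t2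
    filter_upwards [hφt.eventually hu2] with n hn
    exact (nproj_spec (h _ hn)).2
  have haeq : a = nproj S z₀ := eq_nproj_of hz₀' haS hda
  exact ⟨φ, by rwa [← haeq]⟩

theorem locallyConnected_of_positive_reach [FiniteDimensional ℝ E]
    (S : Set E) (hS : IsClosed S)
    (hreach : ∀ x ∈ S, ∃ r : ℝ, 0 < r ∧ ∀ z ∈ ball x r, HasUniqueNearestPoint S z) :
    LocallyConnectedSpace S := by
  rw [locallyConnectedSpace_iff_connected_subsets]
  intro x U hU
  rw [nhds_subtype_eq_comap, mem_comap] at hU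
  obtain ⟨W, hW, hWU⟩ := hU
  obtain ⟨ε, hε, hball⟩ := Metric.mem_nhds_iff.mp hW
  obtain ⟨r, hr, h⟩ := hreach (x : E) x.2
  set δ : ℝ := min (ε / 2) r with hδdef
  have hδ : 0 < δ := lt_min (by linarith) hr
  have hδr : δ ≤ r := min_le_right _ _
  have hδε : 2 * δ ≤ ε := by
    have : δ ≤ ε / 2 := min_le_left _ _
    linarith
  have hsub : ball (x : E) δ ⊆ ball (x : E) r := ball_subset_ball hδr
  set T : Set E := nproj S '' ball (x : E) δ with hT
  -- T ⊆ S ∩ ball x ε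
  have hTS : T ⊆ S := by
    rintro _ ⟨z, hz, rfl⟩
    exact (nproj_spec (h z (hsub hz))).1
  have hTball : T ⊆ ball (x : E) ε := by
    rintro _ ⟨z, hz, rfl⟩
    have hsp := nproj_spec (h z (hsub hz))
    rw [mem_ball]
    calc dist (nproj S z) (x : E) ≤ dist (nproj S z) z + dist z (x : E) := dist_triangle _ _ _
      _ = infDist z S + dist z (x : E) := by rw [dist_comm, hsp.2]
      _ ≤ dist z (x : E) + dist z (x : E) := by
          have : infDist z S ≤ dist z (x : E) := infDist_le_dist_of_mem x.2
          linarith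
      _ < δ + δ := by
          have : dist z (x : E) < δ := mem_ball.mp hz
          linarith
      _ ≤ ε := by linarith
  refine ⟨Subtype.val ⁻¹' T, ?_, ?_, ?_⟩
  · -- neighborhood: points of S in the small ball are fixed by nproj
    rw [nhds_subtype_eq_comap, mem_comap]
    refine ⟨ball (x : E) δ, ball_mem_nhds _ hδ, ?_⟩
    rintro ⟨y, hyS⟩ hy
    simp only [mem_preimage] at hy ⊢
    exact ⟨y, hy, nproj_mem_of_self (h y (hsub hy)) hyS⟩
  · -- preconnected
    have hTpre : IsPreconnected T :=
      (convex_ball (x : E) δ).isPreconnected.image _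
        ((continuousOn_nproj hS h).mono hsub)
    have : Subtype.val '' (Subtype.val ⁻¹' T : Set S) = T := by
      rw [Set.image_preimage_eq_inter_range, Subtype.range_coe]
      exact inter_eq_self_of_subset_left hTS
    exact Topology.IsInducing.subtypeVal.isPreconnected_image.mp (by rwa [this])
  · -- contained in U
    exact fun y hy => hWU (hball (hTball hy))
end

section
/- Let S ⊆ E be a closed set, let x ∈ ∂S, and suppose there exist an open neighborhood U of x and a C¹ map ψ = (ψ₁, …, ψ_k) : U → ℝ^k whose derivative Dψ(u) : E → ℝ^k is surjective for every u ∈ U, such that U ∩ ∂S = ψ⁻¹(0). Then N^P_S(x) ⊆ span{∇ψ₁(x), …, ∇ψ_k(x)} = (ker Dψ(x))^⊥, the normal space to ∂S at x. -/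
open Filter Topology Metric Set
open scoped RealInnerProductSpace NNReal

variable {E : Type*} [NormedAddCommGroup E] [InnerProductSpace ℝ E]

/-- The proximal normal cone to a set `S` at a point `x`. -/
def proxNormalCone (S : Set E) (x : E) : Set E :=
  {ξ | ∃ σ : ℝ, 0 < σ ∧ ∃ U ∈ 𝓝 x, ∀ y ∈ S ∩ U, ⟪ξ, y - x⟫ ≤ σ * ‖y - x‖ ^ 2}

/-- The Bouligand (contingent) tangent cone to `S` at `x`. -/
def bouligandCone (S : Set E) (x : E) : Set E :=
  {v | ∃ (z : ℕ → E) (t : ℕ → ℝ), (∀ i, z i ∈ S) ∧ (∀ i, 0 < t i) ∧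
    Tendsto z atTop (𝓝 x) ∧ Tendsto t atTop (𝓝 0) ∧
    Tendsto (fun i => (t i)⁻¹ • (z i - x)) atTop (𝓝 v)}

/-- The polar cone of a set `K`. -/
def polarCone (K : Set E) : Set E := {v | ∀ w ∈ K, ⟪v, w⟫ ≤ 0}

/-- `S` is `φ`-convex for a continuous nonnegative function `φ` on `S`. -/
def IsPhiConvex (S : Set E) (φ : E → ℝ) : Prop :=
  ContinuousOn φ S ∧ (∀ x ∈ S, 0 ≤ φ x) ∧
  ∀ x ∈ S, ∃ U ∈ 𝓝 x, ∀ ξ ∈ proxNormalCone S x, ∀ y ∈ S ∩ U,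
    ⟪ξ, y - x⟫ ≤ φ x * ‖ξ‖ * ‖y - x‖ ^ 2

/-- `S` is prox-regular if it is `φ`-convex for some continuous `φ : S → [0,∞)`. -/
def ProxRegular (S : Set E) : Prop := ∃ φ : E → ℝ, IsPhiConvex S φ

theorem proxNormalCone_subset_span_gradients [FiniteDimensional ℝ E]
    (S : Set E) (hS : IsClosed S) (x : E) (hx : x ∈ frontier S)
    (k : ℕ) (U : Set E) (ψ : E → (Fin k → ℝ))
    (hU : IsOpen U) (hxU : x ∈ U)
    (hψ : ContDiffOn ℝ 1 ψ U)
    (hsurj : ∀ u ∈ U, Function.Surjective (fderiv ℝ ψ u))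
    (hlevel : U ∩ frontier S = U ∩ ψ ⁻¹' {0}) :
    proxNormalCone S x ⊆
      (Submodule.span ℝ (Set.range fun i : Fin k => gradient (fun y => ψ y i) x) : Set E) ∧
    (Submodule.span ℝ (Set.range fun i : Fin k => gradient (fun y => ψ y i) x) : Set E) =
      ((LinearMap.ker (fderiv ℝ ψ x : E →ₗ[ℝ] (Fin k → ℝ)))ᗮ : Set E) := by
  classical
  have hψx : ContDiffAt ℝ 1 ψ x := hψ.contDiffAt (hU.mem_nhds hxU)
  set f' := fderiv ℝ ψ x with hf'def
  have hstrict : HasStrictFDerivAt ψ f' x := hψx.hasStrictFDerivAt one_ne_zero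
  have hdiff : DifferentiableAt ℝ ψ x := hψx.differentiableAt one_ne_zero
  have hrange : LinearMap.range (f' : E →ₗ[ℝ] (Fin k → ℝ)) = ⊤ := (LinearMap.range_eq_top (f := (f' : E →ₗ[ℝ] (Fin k → ℝ)))).2 (hsurj x hxU)
  set g : Fin k → E := fun i => gradient (fun y => ψ y i) x with hgdef
  -- inner products with the gradients compute the derivative
  have hginner : ∀ (i : Fin k) (v : E), ⟪g i, v⟫ = f' v i := by
    intro i v
    have h1 : HasFDerivAt (fun y => ψ y i)
        ((ContinuousLinearMap.proj i).comp f') x :=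
      ((ContinuousLinearMap.proj i : (Fin k → ℝ) →L[ℝ] ℝ).hasFDerivAt).comp x
        hdiff.hasFDerivAt
    have h2 : g i = (InnerProductSpace.toDual ℝ E).symm
        ((ContinuousLinearMap.proj i).comp f') := by
      simp only [hgdef, gradient, h1.fderiv]
    rw [h2, InnerProductSpace.toDual_symm_apply]
    rfl
  -- the kernel is the orthogonal complement of the span of the gradients
  have hker : LinearMap.ker (f' : E →ₗ[ℝ] (Fin k → ℝ)) = (Submodule.span ℝ (Set.range g))ᗮ := by
    ext v
    rw [LinearMap.mem_ker, Submodule.mem_orthogonal]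
    constructor
    · intro hv u hu
      induction hu using Submodule.span_induction with
      | mem u hu =>
        obtain ⟨i, rfl⟩ := hu
        rw [hginner i v, show f' v = 0 from hv]; rfl
      | zero => simp
      | add u w _ _ hu hw => rw [inner_add_left, hu, hw, add_zero]
      | smul c u _ hu => rw [inner_smul_left, hu, mul_zero]
    · intro h
      funext i
      have := h (g i) (Submodule.subset_span ⟨i, rfl⟩)
      rw [hginner i v] at this
      simpa using this
  have hspan : Submodule.span ℝ (Set.range g) = (LinearMap.ker (f' : E →ₗ[ℝ] (Fin k → ℝ)))ᗮ := by
    rw [hker, Submodule.orthogonal_orthogonal]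
  have hψx0 : ψ x = 0 := by
    have : x ∈ U ∩ ψ ⁻¹' {0} := hlevel ▸ ⟨hxU, hx⟩
    simpa using this.2
  refine ⟨?_, by rw [hspan]⟩
  intro ξ hξ
  rw [hspan]
  obtain ⟨σ, hσ, V, hV, hprox⟩ := hξ
  -- key claim: the inner product with any kernel vector is ≤ 0
  have key : ∀ v ∈ LinearMap.ker (f' : E →ₗ[ℝ] (Fin k → ℝ)), ⟪ξ, v⟫ ≤ 0 := by
    intro v hv
    set c : (Fin k → ℝ) → (LinearMap.ker (f' : E →ₗ[ℝ] (Fin k → ℝ))) → E :=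
      hstrict.implicitFunction ψ f' hrange with hcdef
    set v' : LinearMap.ker (f' : E →ₗ[ℝ] (Fin k → ℝ)) := ⟨v, hv⟩ with hv'def
    set γ : ℝ → E := fun t => c (ψ x) (t • v') with hγdef
    have hγ0 : γ 0 = x := by
      simp only [hγdef, zero_smul]
      exact hstrict.implicitFunction_apply_image hrange
    -- derivative of γ at 0 is v
    have hder : HasDerivAt γ v 0 := by
      have h1 : HasDerivAt (fun t : ℝ => t • v') v' 0 := by
        simpa using (hasDerivAt_id (0:ℝ)).smul_const v'
      have h2 := (hstrict.to_implicitFunction hrange).hasFDerivAt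
      have h2' : HasFDerivAt (hstrict.implicitFunction ψ f' hrange (ψ x))
          (LinearMap.ker (f' : E →ₗ[ℝ] (Fin k → ℝ))).subtypeL ((0:ℝ) • v') := by simpa using h2
      have h3 := h2'.comp_hasDerivAt 0 h1
      exact h3
    -- eventually ψ (γ t) = ψ x
    have hlev : ∀ᶠ t : ℝ in 𝓝 0, ψ (γ t) = ψ x := by
      have h1 : Tendsto (fun t : ℝ => ((ψ x, t • v') : (Fin k → ℝ) × LinearMap.ker (f' : E →ₗ[ℝ] (Fin k → ℝ))))
          (𝓝 0) (𝓝 (ψ x, 0)) := by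
        apply Tendsto.prodMk_nhds tendsto_const_nhds
        simpa using (tendsto_id (α := ℝ) (x := 𝓝 0)).smul_const v'
      have := h1.eventually (hstrict.map_implicitFunction_eq hrange)
      exact this
    have hγcont : ContinuousAt γ 0 := hder.continuousAt
    -- eventually γ t ∈ S ∩ V
    have hmem : ∀ᶠ t : ℝ in 𝓝 0, γ t ∈ S ∩ V := by
      have hU' : ∀ᶠ t : ℝ in 𝓝 0, γ t ∈ U := by
        have := hγcont.preimage_mem_nhds (by rw [hγ0]; exact hU.mem_nhds hxU)
        exact this
      have hV' : ∀ᶠ t : ℝ in 𝓝 0, γ t ∈ V := by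
        have := hγcont.preimage_mem_nhds (by rw [hγ0]; exact hV)
        exact this
      filter_upwards [hU', hV', hlev] with t htU htV htlev
      have hfr : γ t ∈ U ∩ frontier S := by
        rw [hlevel]
        exact ⟨htU, by simp [htlev, hψx0]⟩
      exact ⟨hS.frontier_subset hfr.2, htV⟩
    -- pass to the limit along t → 0⁺
    have hslope : Tendsto (slope γ 0) (𝓝[>] (0:ℝ)) (𝓝 v) := by
      refine (hasDerivAt_iff_tendsto_slope.1 hder).mono_left
        (nhdsWithin_mono 0 ?_)
      intro t ht
      exact ne_of_gt ht
    have hLHS : Tendsto (fun t => ⟪ξ, slope γ 0 t⟫) (𝓝[>] (0:ℝ)) (𝓝 ⟪ξ, v⟫) :=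
      (continuous_const.inner continuous_id).continuousAt.tendsto.comp hslope
    have hRHS : Tendsto (fun t => σ * t * ‖slope γ 0 t‖ ^ 2) (𝓝[>] (0:ℝ)) (𝓝 0) := by
      have h1 : Tendsto (fun t => ‖slope γ 0 t‖ ^ 2) (𝓝[>] (0:ℝ)) (𝓝 (‖v‖ ^ 2)) :=
        (hslope.norm).pow 2
      have h2 : Tendsto (fun t : ℝ => σ * t) (𝓝[>] (0:ℝ)) (𝓝 0) := by
        have h3 : Tendsto (fun t : ℝ => σ * t) (𝓝 0) (𝓝 (σ * 0)) :=
          tendsto_const_nhds.mul tendsto_id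
        simpa using h3.mono_left nhdsWithin_le_nhds
      simpa using h2.mul h1
    have hineq : ∀ᶠ t : ℝ in 𝓝[>] (0:ℝ),
        ⟪ξ, slope γ 0 t⟫ ≤ σ * t * ‖slope γ 0 t‖ ^ 2 := by
      filter_upwards [eventually_nhdsWithin_of_eventually_nhds hmem,
        self_mem_nhdsWithin] with t hmemt (ht : (0:ℝ) < t)
      have h1 := hprox (γ t) hmemt
      have hslope_eq : slope γ 0 t = t⁻¹ • (γ t - x) := by
        rw [slope_def_module, hγ0, sub_zero]
      rw [hslope_eq, real_inner_smul_right, norm_smul]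
      have ht' : (0:ℝ) < t⁻¹ := inv_pos.2 ht
      calc t⁻¹ * ⟪ξ, γ t - x⟫ ≤ t⁻¹ * (σ * ‖γ t - x‖ ^ 2) := by
            exact mul_le_mul_of_nonneg_left h1 ht'.le
        _ = σ * t * (‖t⁻¹‖ * ‖γ t - x‖) ^ 2 := by
            rw [Real.norm_eq_abs, abs_of_pos ht']
            field_simp
    exact le_of_tendsto_of_tendsto hLHS hRHS hineq
  -- conclude ξ ⟂ ker f'
  rw [SetLike.mem_coe, Submodule.mem_orthogonal]
  intro u hu
  have h1 := key u hu
  have h2 := key (-u) (neg_mem hu)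
  rw [inner_neg_right] at h2
  have : ⟪ξ, u⟫ = 0 := le_antisymm h1 (by linarith)
  rw [real_inner_comm]
  exact this
end

section
/- Let S ⊆ E be a closed prox-regular set with nonempty interior, let x ∈ ∂S, and suppose there exist an open neighborhood U of x and a C² function ψ : U → ℝ with Dψ(u) ≠ 0 for every u ∈ U, such that U ∩ ∂S = ψ⁻¹(0) and ψ(y) ≤ 0 for every y ∈ U ∩ S. Then either N^P_S(x) = {λ∇ψ(x) : λ ≥ 0} (the cone generated by ∇ψ(x)) or N^P_S(x) = ℝ∇ψ(x) (the span of ∇ψ(x)). -/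
open Filter Topology Metric Set
open scoped RealInnerProductSpace NNReal

variable {E : Type*} [NormedAddCommGroup E] [InnerProductSpace ℝ E]

set_option maxHeartbeats 2000000 in
theorem proxNormalCone_eq_cone_or_span_gradient [FiniteDimensional ℝ E]
    (S : Set E) (hS : IsClosed S) (hpr : ProxRegular S)
    (hint : (interior S).Nonempty)
    (x : E) (hx : x ∈ frontier S)
    (U : Set E) (ψ : E → ℝ)
    (hU : IsOpen U) (hxU : x ∈ U)
    (hψ : ContDiffOn ℝ 2 ψ U)
    (hD : ∀ u ∈ U, fderiv ℝ ψ u ≠ 0)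
    (hlevel : U ∩ frontier S = U ∩ ψ ⁻¹' {0})
    (hneg : ∀ y ∈ U ∩ S, ψ y ≤ 0) :
    proxNormalCone S x = {ξ | ∃ l : ℝ, 0 ≤ l ∧ ξ = l • gradient ψ x} ∨
    proxNormalCone S x = {ξ | ∃ l : ℝ, ξ = l • gradient ψ x} := by
  classical
  have hxS : x ∈ S := hS.frontier_subset hx
  have hψx : ψ x = 0 := by
    have : x ∈ U ∩ ψ ⁻¹' {0} := by rw [← hlevel]; exact ⟨hxU, hx⟩
    simpa using this.2
  set G := gradient ψ x with hGdef
  have hgrad : ∀ v : E, ⟪G, v⟫ = fderiv ℝ ψ x v := fun v => by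
    rw [hGdef, gradient]; exact InnerProductSpace.toDual_symm_apply
  have hGne : G ≠ 0 := by
    intro h
    apply hD x hxU
    ext v
    have := hgrad v
    rw [h] at this
    simpa using this.symm
  have hgpos : (0:ℝ) < ‖G‖ ^ 2 := pow_pos (norm_pos_iff.2 hGne) 2
  -- Taylor bound
  obtain ⟨M, hM, r, hr, hrU, htaylor⟩ :
      ∃ M : ℝ, 0 < M ∧ ∃ r : ℝ, 0 < r ∧ closedBall x r ⊆ U ∧
        ∀ h : E, ‖h‖ ≤ r → |ψ (x + h) - ⟪G, h⟫| ≤ M * ‖h‖ ^ 2 := by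
    have hf1 : ContDiffOn ℝ 1 (fderiv ℝ ψ) U := hψ.fderiv_of_isOpen hU (by norm_num)
    have hat : ContDiffAt ℝ 1 (fderiv ℝ ψ) x := (hf1 x hxU).contDiffAt (hU.mem_nhds hxU)
    obtain ⟨L, t, ht, hlip⟩ := hat.exists_lipschitzOnWith
    obtain ⟨ρ, hρ, hball⟩ := Metric.mem_nhds_iff.1 (Filter.inter_mem ht (hU.mem_nhds hxU))
    refine ⟨(L:ℝ) + 1, by positivity, ρ/2, by positivity, ?_, ?_⟩
    · intro z hz
      exact (hball (lt_of_le_of_lt (mem_closedBall.1 hz) (by linarith))).2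
    · intro h hh
      have hsub : closedBall x ‖h‖ ⊆ ball x ρ := by
        intro z hz
        exact lt_of_le_of_lt (le_trans (mem_closedBall.1 hz) hh) (by linarith)
      have hdiff : ∀ z ∈ closedBall x ‖h‖,
          HasFDerivWithinAt ψ (fderiv ℝ ψ z) (closedBall x ‖h‖) z := by
        intro z hz
        have hzU : z ∈ U := (hball (hsub hz)).2
        exact (((hψ z hzU).contDiffAt (hU.mem_nhds hzU)).differentiableAt
          (by norm_num)).hasFDerivAt.hasFDerivWithinAt
      have hbound : ∀ z ∈ closedBall x ‖h‖,
          ‖fderiv ℝ ψ z - fderiv ℝ ψ x‖ ≤ ((L:ℝ) + 1) * ‖h‖ := by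
        intro z hz
        have hzt : z ∈ t := (hball (hsub hz)).1
        have hxt : x ∈ t := (hball (mem_ball_self hρ)).1
        have := hlip.dist_le_mul z hzt x hxt
        rw [dist_eq_norm, dist_eq_norm] at this
        calc ‖fderiv ℝ ψ z - fderiv ℝ ψ x‖ ≤ (L:ℝ) * ‖z - x‖ := this
          _ ≤ ((L:ℝ) + 1) * ‖h‖ := by
              have h1 : ‖z - x‖ ≤ ‖h‖ := by
                rw [← dist_eq_norm]; exact mem_closedBall.1 hz
              nlinarith [norm_nonneg h, L.coe_nonneg]
      have hxmem : x ∈ closedBall x ‖h‖ := mem_closedBall_self (norm_nonneg h)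
      have hymem : x + h ∈ closedBall x ‖h‖ := by
        simp [mem_closedBall, dist_eq_norm]
      have := (convex_closedBall x ‖h‖).norm_image_sub_le_of_norm_hasFDerivWithin_le'
        hdiff hbound hxmem hymem
      rw [hψx, add_sub_cancel_left, sub_zero, Real.norm_eq_abs] at this
      rw [hgrad]
      calc |ψ (x + h) - fderiv ℝ ψ x h| ≤ ((L:ℝ) + 1) * ‖h‖ * ‖h‖ := this
        _ = ((L:ℝ) + 1) * ‖h‖ ^ 2 := by ring
  -- closure under nonnegative scaling
  have hsmul : ∀ c : ℝ, 0 ≤ c → ∀ ξ ∈ proxNormalCone S x, c • ξ ∈ proxNormalCone S x := by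
    rintro c hc ξ ⟨σ, hσ, V, hV, hb⟩
    refine ⟨c * σ + 1, by positivity, V, hV, fun y hy => ?_⟩
    have h1 := hb y hy
    have h2 : ⟪c • ξ, y - x⟫ = c * ⟪ξ, y - x⟫ := real_inner_smul_left _ _ _
    nlinarith [sq_nonneg ‖y - x‖, mul_le_mul_of_nonneg_left h1 hc]
  -- G is a proximal normal
  have hGmem : G ∈ proxNormalCone S x := by
    refine ⟨M, hM, closedBall x r, closedBall_mem_nhds x hr, fun y hy => ?_⟩
    obtain ⟨hyS, hyB⟩ := hy
    have hyU : y ∈ U := hrU hyB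
    have hnorm : ‖y - x‖ ≤ r := by rw [← dist_eq_norm]; exact mem_closedBall.1 hyB
    have ht := htaylor (y - x) hnorm
    rw [add_sub_cancel] at ht
    have hψy : ψ y ≤ 0 := hneg y ⟨hyU, hyS⟩
    have := abs_le.1 ht
    linarith [this.1]
  -- perpendicularity via IVT
  have hperp : ∀ ξ ∈ proxNormalCone S x, ∀ v : E, ⟪G, v⟫ = 0 → ⟪ξ, v⟫ ≤ 0 := by
    rintro ξ ⟨σ, hσ, V, hV, hb⟩ v hv
    rcases eq_or_ne v 0 with rfl | hv0
    · simp
    by_contra hpos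
    push_neg at hpos
    set A := ‖v‖ with hAdef
    have hA : 0 < A := norm_pos_iff.2 hv0
    set g := ‖G‖ ^ 2 with hgdef
    set K := (4 * M * A ^ 2 + 1) / g with hKdef
    have hK : 0 < K := by positivity
    obtain ⟨ε, hε, hballV⟩ := Metric.mem_nhds_iff.1 hV
    set P := ⟪ξ, v⟫ with hPdef
    set D := 4 * σ * A ^ 2 + K * |⟪ξ, G⟫| + 1 with hDdef
    have hD0 : 0 < D := by positivity
    set t := min (min (A / (K * ‖G‖)) (r / (2 * A))) (min (ε / (4 * A)) (P / (2 * D))) with htdef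
    have hGnorm : 0 < ‖G‖ := norm_pos_iff.2 hGne
    have ht0 : 0 < t := by
      refine lt_min (lt_min (by positivity) (by positivity)) (lt_min (by positivity) (by positivity))
    have ht1 : t ≤ A / (K * ‖G‖) := (min_le_left _ _).trans (min_le_left _ _)
    have ht2 : t ≤ r / (2 * A) := (min_le_left _ _).trans (min_le_right _ _)
    have ht3 : t ≤ ε / (4 * A) := (min_le_right _ _).trans (min_le_left _ _)
    have ht4 : t ≤ P / (2 * D) := (min_le_right _ _).trans (min_le_right _ _)
    have hKtG : K * t * ‖G‖ ≤ A := by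
      rw [le_div_iff₀ (by positivity)] at ht1
      nlinarith
    have h2tA : 2 * t * A ≤ r := by
      rw [le_div_iff₀ (by positivity)] at ht2; linarith
    have h2tAε : 2 * t * A < ε := by
      rw [le_div_iff₀ (by positivity)] at ht3; nlinarith
    -- norm bound for s in range
    have hnormb : ∀ s : ℝ, |s| ≤ K * t ^ 2 → ‖t • v + s • G‖ ≤ 2 * t * A := by
      intro s hs
      calc ‖t • v + s • G‖ ≤ ‖t • v‖ + ‖s • G‖ := norm_add_le _ _
        _ = t * A + |s| * ‖G‖ := by
            rw [norm_smul, norm_smul, Real.norm_eq_abs, Real.norm_eq_abs,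
              abs_of_pos ht0]
        _ ≤ t * A + (K * t ^ 2) * ‖G‖ := by
            have := mul_le_mul_of_nonneg_right hs (norm_nonneg G)
            linarith
        _ ≤ 2 * t * A := by nlinarith
    -- Taylor estimate for points on the segment family
    have hest : ∀ s : ℝ, |s| ≤ K * t ^ 2 →
        |ψ (x + (t • v + s • G)) - s * g| ≤ 4 * M * A ^ 2 * t ^ 2 := by
      intro s hs
      have hn := hnormb s hs
      have := htaylor (t • v + s • G) (le_trans hn h2tA)
      have hin : ⟪G, t • v + s • G⟫ = s * g := by
        rw [inner_add_right, real_inner_smul_right, real_inner_smul_right, hv,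
          real_inner_self_eq_norm_sq]
        ring
      rw [hin] at this
      calc |ψ (x + (t • v + s • G)) - s * g| ≤ M * ‖t • v + s • G‖ ^ 2 := this
        _ ≤ 4 * M * A ^ 2 * t ^ 2 := by nlinarith [norm_nonneg (t • v + s • G), mul_le_mul hn hn (norm_nonneg _) (by positivity : (0:ℝ) ≤ 2 * t * A)]
    -- IVT
    have hKg : K * g = 4 * M * A ^ 2 + 1 := by
      rw [hKdef]; field_simp
    have hcont : ContinuousOn (fun s : ℝ => ψ (x + (t • v + s • G)))
        (Icc (-(K * t ^ 2)) (K * t ^ 2)) := by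
      apply hψ.continuousOn.comp
      · exact (continuous_const.add (continuous_const.add
          ((continuous_id.smul continuous_const)))).continuousOn
      · intro s hs
        have : |s| ≤ K * t ^ 2 := abs_le.2 ⟨hs.1, hs.2⟩
        exact hrU (by
          rw [mem_closedBall, dist_eq_norm, add_sub_cancel_left]
          exact le_trans (hnormb s this) h2tA)
    have hK2 : -(K * t ^ 2) ≤ K * t ^ 2 := by nlinarith
    have hfa : ψ (x + (t • v + (-(K * t ^ 2)) • G)) ≤ 0 := by
      have := hest (-(K * t ^ 2)) (by rw [abs_neg, abs_of_pos (by positivity)])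
      have habs := (abs_le.1 this).2
      nlinarith
    have hfb : 0 ≤ ψ (x + (t • v + (K * t ^ 2) • G)) := by
      have := hest (K * t ^ 2) (by rw [abs_of_pos (by positivity)])
      have habs := (abs_le.1 this).1
      nlinarith
    have hmem0 : (0:ℝ) ∈ Icc (ψ (x + (t • v + (-(K * t ^ 2)) • G)))
        (ψ (x + (t • v + (K * t ^ 2) • G))) := ⟨hfa, hfb⟩
    obtain ⟨s, hsIcc, hs0⟩ := intermediate_value_Icc hK2 hcont hmem0
    have hsabs : |s| ≤ K * t ^ 2 := abs_le.2 ⟨hsIcc.1, hsIcc.2⟩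
    set z := x + (t • v + s • G) with hzdef
    have hzU : z ∈ U := hrU (by
      rw [mem_closedBall, dist_eq_norm, hzdef, add_sub_cancel_left]
      exact le_trans (hnormb s hsabs) h2tA)
    have hzS : z ∈ S := by
      have : z ∈ U ∩ frontier S := by
        rw [hlevel]
        exact ⟨hzU, by simpa [hzdef] using hs0⟩
      exact hS.frontier_subset this.2
    have hzV : z ∈ V := hballV (by
      rw [mem_ball, dist_eq_norm, hzdef, add_sub_cancel_left]
      exact lt_of_le_of_lt (hnormb s hsabs) h2tAε)
    have hzx : z - x = t • v + s • G := by rw [hzdef]; abel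
    have hineq := hb z ⟨hzS, hzV⟩
    rw [hzx] at hineq
    have hinner : ⟪ξ, t • v + s • G⟫ = t * P + s * ⟪ξ, G⟫ := by
      rw [inner_add_right, real_inner_smul_right, real_inner_smul_right]
    rw [hinner] at hineq
    have hnb : ‖t • v + s • G‖ ≤ 2 * t * A := hnormb s hsabs
    have hsq : ‖t • v + s • G‖ ^ 2 ≤ 4 * t ^ 2 * A ^ 2 := by
      nlinarith [norm_nonneg (t • v + s • G)]
    -- final contradiction
    have hsξG : s * ⟪ξ, G⟫ ≥ -(K * t ^ 2 * |⟪ξ, G⟫|) := by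
      have h1 : s * ⟪ξ, G⟫ ≥ -(|s| * |⟪ξ, G⟫|) := by
        rw [← abs_mul]
        exact neg_abs_le _
      have h2 : |s| * |⟪ξ, G⟫| ≤ K * t ^ 2 * |⟪ξ, G⟫| :=
        mul_le_mul_of_nonneg_right hsabs (abs_nonneg _)
      linarith
    have hfinal : t * P ≤ t ^ 2 * (D - 1) := by
      have : t * P + s * ⟪ξ, G⟫ ≤ σ * (4 * t ^ 2 * A ^ 2) := by
        calc t * P + s * ⟪ξ, G⟫ ≤ σ * ‖t • v + s • G‖ ^ 2 := hineq
          _ ≤ σ * (4 * t ^ 2 * A ^ 2) := by nlinarith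
      rw [hDdef]
      nlinarith
    rw [le_div_iff₀ (by positivity)] at ht4
    nlinarith
  -- span containment
  have hspan : ∀ ξ ∈ proxNormalCone S x, ∃ l : ℝ, ξ = l • G := by
    intro ξ hξ
    refine ⟨⟪G, ξ⟫ / ‖G‖ ^ 2, ?_⟩
    set l := ⟪G, ξ⟫ / ‖G‖ ^ 2 with hldef
    have hvperp : ⟪G, ξ - l • G⟫ = 0 := by
      rw [inner_sub_right, real_inner_smul_right, real_inner_self_eq_norm_sq, hldef]
      field_simp
      ring
    have h1 := hperp ξ hξ _ hvperp
    have h2 := hperp ξ hξ (-(ξ - l • G)) (by rw [inner_neg_right, hvperp, neg_zero])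
    rw [inner_neg_right] at h2
    have h3 : ⟪ξ, ξ - l • G⟫ = 0 := le_antisymm h1 (by linarith)
    have h4 : ⟪ξ - l • G, ξ - l • G⟫ = 0 := by
      rw [inner_sub_left, h3, real_inner_smul_left, hvperp]
      ring
    have h5 : ξ - l • G = 0 := inner_self_eq_zero.1 h4
    rw [sub_eq_zero] at h5
    exact h5
  by_cases hnegG : -G ∈ proxNormalCone S x
  · right
    ext ξ
    constructor
    · intro hξ; exact hspan ξ hξ
    · rintro ⟨l, rfl⟩
      rcases le_or_gt 0 l with hl | hl
      · exact hsmul l hl G hGmem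
      · have heq : l • G = (-l) • (-G) := by rw [neg_smul, smul_neg, neg_neg]
        rw [heq]
        exact hsmul (-l) (by linarith) _ hnegG
  · left
    ext ξ
    constructor
    · intro hξ
      obtain ⟨l, rfl⟩ := hspan ξ hξ
      refine ⟨l, ?_, rfl⟩
      by_contra hl
      push_neg at hl
      apply hnegG
      have heq : -G = (-l⁻¹) • (l • G) := by
        rw [smul_smul, neg_mul, inv_mul_cancel₀ (ne_of_lt hl), neg_one_smul]
      rw [heq]
      have : (0:ℝ) ≤ -l⁻¹ := by
        have : l⁻¹ < 0 := inv_neg''.mpr hl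
        linarith
      exact hsmul _ this _ hξ
    · rintro ⟨l, hl, rfl⟩; exact hsmul l hl G hGmem
end

section
/- Let S ⊆ E be a closed prox-regular set with nonempty interior, let x ∈ ∂S, and suppose there exist an open neighborhood U of x and a C² function ψ : U → ℝ with Dψ(u) ≠ 0 for every u ∈ U, such that U ∩ ∂S = ψ⁻¹(0) and ψ(y) ≤ 0 for every y ∈ U ∩ S. Assume moreover that every neighborhood V ⊆ U of x meets the interior of S. Set Ŝ := (E \ S) ∪ ∂S. Then N^P_Ŝ(x) = {λ(−∇ψ(x)) : λ ≥ 0}. -/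
open Filter Topology Metric Set
open scoped RealInnerProductSpace NNReal

variable {E : Type*} [NormedAddCommGroup E] [InnerProductSpace ℝ E]

lemma fderiv_eq_inner_gradient [CompleteSpace E] (f : E → ℝ) (x v : E) :
    fderiv ℝ f x v = ⟪gradient f x, v⟫ := by
  have h : fderiv ℝ f x = InnerProductSpace.toDual ℝ E (gradient f x) :=
    ((InnerProductSpace.toDual ℝ E).apply_symm_apply _).symm
  rw [h, InnerProductSpace.toDual_apply_apply]

lemma taylor_bound_aux {f : E → ℝ} {s : Set E} (hs : Convex ℝ s)
    (hd : ∀ z ∈ s, HasFDerivAt f (fderiv ℝ f z) z)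
    {K : ℝ} (hK : 0 ≤ K)
    (hlip : ∀ u ∈ s, ∀ v ∈ s, ‖fderiv ℝ f u - fderiv ℝ f v‖ ≤ K * ‖u - v‖)
    {u y : E} (hu : u ∈ s) (hy : y ∈ s) :
    |f y - f u - fderiv ℝ f u (y - u)| ≤ K * ‖y - u‖ ^ 2 := by
  have hseg : segment ℝ u y ⊆ s := hs.segment_subset hu hy
  have hbound : ∀ z ∈ segment ℝ u y, ‖fderiv ℝ f z - fderiv ℝ f u‖ ≤ K * ‖y - u‖ := by
    intro z hz
    have h1 : ‖fderiv ℝ f z - fderiv ℝ f u‖ ≤ K * ‖z - u‖ := hlip z (hseg hz) u hu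
    have h2 : ‖z - u‖ ≤ ‖y - u‖ := by
      obtain ⟨a, b, ha, hb, hab, rfl⟩ := hz
      have hz' : a • u + b • y - u = b • (y - u) := by
        have : a = 1 - b := by linarith
        subst this; module
      rw [hz', norm_smul, Real.norm_eq_abs, abs_of_nonneg hb]
      nlinarith [norm_nonneg (y - u)]
    nlinarith [norm_nonneg (z - u)]
  have := (convex_segment u y).norm_image_sub_le_of_norm_hasFDerivWithin_le'
    (f := f) (f' := fderiv ℝ f) (φ := fderiv ℝ f u)
    (fun z hz => (hd z (hseg hz)).hasFDerivWithinAt) hbound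
    (left_mem_segment ℝ u y) (right_mem_segment ℝ u y)
  rw [Real.norm_eq_abs] at this
  calc |f y - f u - fderiv ℝ f u (y - u)| ≤ K * ‖y - u‖ * ‖y - u‖ := this
    _ = K * ‖y - u‖ ^ 2 := by ring

set_option maxHeartbeats 16000000 in
theorem proxNormalCone_complement_eq_cone_neg_gradient [FiniteDimensional ℝ E]
    (S : Set E) (hS : IsClosed S) (hpr : ProxRegular S)
    (hint : (interior S).Nonempty)
    (x : E) (hx : x ∈ frontier S)
    (U : Set E) (ψ : E → ℝ)
    (hU : IsOpen U) (hxU : x ∈ U)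
    (hψ : ContDiffOn ℝ 2 ψ U)
    (hD : ∀ u ∈ U, fderiv ℝ ψ u ≠ 0)
    (hlevel : U ∩ frontier S = U ∩ ψ ⁻¹' {0})
    (hneg : ∀ y ∈ U ∩ S, ψ y ≤ 0)
    (hmeet : ∀ V ∈ 𝓝 x, V ⊆ U → (V ∩ interior S).Nonempty) :
    proxNormalCone (Sᶜ ∪ frontier S) x = {ξ | ∃ l : ℝ, 0 ≤ l ∧ ξ = l • (-(gradient ψ x))} := by
  -- notation
  obtain ⟨w, hwdef⟩ : ∃ w : E, w = gradient ψ x := ⟨_, rfl⟩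
  obtain ⟨W, hWdef⟩ : ∃ W : ℝ, W = ‖w‖ := ⟨_, rfl⟩
  have hfd : ∀ v : E, fderiv ℝ ψ x v = ⟪w, v⟫ := fun v => by
    rw [hwdef]; exact fderiv_eq_inner_gradient ψ x v
  have hw0 : w ≠ 0 := by
    intro h
    apply hD x hxU
    have h2 : fderiv ℝ ψ x = InnerProductSpace.toDual ℝ E (gradient ψ x) :=
      ((InnerProductSpace.toDual ℝ E).apply_symm_apply _).symm
    rw [h2, ← hwdef, h, map_zero]
  have hW : 0 < W := by rw [hWdef]; exact norm_pos_iff.2 hw0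
  have hWw : ⟪w, w⟫ = W ^ 2 := by rw [hWdef]; exact real_inner_self_eq_norm_sq w
  have hWn : ‖w‖ = W := hWdef.symm
  have hψx : ψ x = 0 := by
    have h : x ∈ U ∩ ψ ⁻¹' {0} := hlevel ▸ ⟨hxU, hx⟩
    exact h.2
  -- frontier of closed set
  have hfr : frontier S = S \ interior S := hS.frontier_eq
  -- Lipschitz bound on fderiv near x
  have h2 : ContDiffAt ℝ 2 ψ x := hψ.contDiffAt (hU.mem_nhds hxU)
  have h1 : ContDiffAt ℝ 1 (fderiv ℝ ψ) x := h2.fderiv_right (by norm_num)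
  obtain ⟨K₀, t, ht, hlip⟩ := h1.exists_lipschitzOnWith
  obtain ⟨K, hKdef⟩ : ∃ K : ℝ, K = (K₀ : ℝ) := ⟨_, rfl⟩
  have hK : 0 ≤ K := by rw [hKdef]; exact K₀.coe_nonneg
  obtain ⟨r₀, hr₀, hsub⟩ := Metric.nhds_basis_closedBall.mem_iff.1 (inter_mem ht (hU.mem_nhds hxU))
  have hsubU : closedBall x r₀ ⊆ U := fun z hz => (hsub hz).2
  have hlip' : ∀ u ∈ closedBall x r₀, ∀ v ∈ closedBall x r₀,
      ‖fderiv ℝ ψ u - fderiv ℝ ψ v‖ ≤ K * ‖u - v‖ := by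
    intro u hu v hv
    have := hlip.dist_le_mul u (hsub hu).1 v (hsub hv).1
    rw [hKdef]
    rwa [dist_eq_norm, dist_eq_norm] at this
  have hdiff : ∀ u ∈ closedBall x r₀, HasFDerivAt ψ (fderiv ℝ ψ u) u :=
    fun u hu => ((hψ.contDiffAt (hU.mem_nhds (hsubU hu))).differentiableAt (by norm_num)).hasFDerivAt
  have taylor : ∀ u ∈ closedBall x r₀, ∀ y ∈ closedBall x r₀,
      |ψ y - ψ u - fderiv ℝ ψ u (y - u)| ≤ K * ‖y - u‖ ^ 2 :=
    fun u hu y hy => taylor_bound_aux (convex_closedBall x r₀) hdiff hK hlip' hu hy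
  have taylorx : ∀ y ∈ closedBall x r₀, |ψ y - ⟪w, y - x⟫| ≤ K * ‖y - x‖ ^ 2 := by
    intro y hy
    have := taylor x (mem_closedBall_self hr₀.le) y hy
    rwa [hψx, hfd, sub_zero] at this
  -- constants
  obtain ⟨L, hLdef⟩ : ∃ L : ℝ, L = W + K * r₀ := ⟨_, rfl⟩
  have hL : 0 < L := by rw [hLdef]; positivity
  obtain ⟨s₀, hs₀def⟩ : ∃ s₀ : ℝ, s₀ = min (r₀ / (2 * W)) (1 / (4 * (K + 1))) := ⟨_, rfl⟩
  have hs₀ : 0 < s₀ := by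
    rw [hs₀def]; exact lt_min (by positivity) (by positivity)
  have hs₀W : s₀ * W ≤ r₀ / 2 := by
    have h : s₀ ≤ r₀ / (2 * W) := by rw [hs₀def]; exact min_le_left _ _
    calc s₀ * W ≤ (r₀ / (2 * W)) * W := mul_le_mul_of_nonneg_right h hW.le
      _ = r₀ / 2 := by field_simp
  have hKs₀ : K * s₀ ≤ 1 / 4 := by
    have h : s₀ ≤ 1 / (4 * (K + 1)) := by rw [hs₀def]; exact min_le_right _ _
    have h4 : (0:ℝ) < 4 * (K + 1) := by positivity
    rw [le_div_iff₀ h4] at h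
    linarith only [h, hs₀.le]
  obtain ⟨δ, hδdef⟩ :
      ∃ δ : ℝ, δ = min (min (r₀ / 2) (W / (4 * (K + 1)))) (s₀ * W ^ 2 / (4 * (L + 1))) := ⟨_, rfl⟩
  have hδ : 0 < δ := by
    rw [hδdef]; exact lt_min (lt_min (by positivity) (by positivity)) (by positivity)
  have hδr₀ : δ ≤ r₀ / 2 := by
    rw [hδdef]; exact le_trans (min_le_left _ _) (min_le_left _ _)
  have hKδ : K * δ ≤ W / 4 := by
    have h : δ ≤ W / (4 * (K + 1)) := by
      rw [hδdef]; exact le_trans (min_le_left _ _) (min_le_right _ _)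
    have h4 : (0:ℝ) < 4 * (K + 1) := by positivity
    rw [le_div_iff₀ h4] at h
    linarith only [h, hδ.le]
  have hLδ : L * δ ≤ s₀ * W ^ 2 / 4 := by
    have h : δ ≤ s₀ * W ^ 2 / (4 * (L + 1)) := by rw [hδdef]; exact min_le_right _ _
    have h4 : (0:ℝ) < 4 * (L + 1) := by positivity
    rw [le_div_iff₀ h4] at h
    linarith only [h, hδ.le]
  -- linear bound on |ψ| near x
  have linψ : ∀ u ∈ closedBall x r₀, |ψ u| ≤ L * ‖u - x‖ := by
    intro u hu
    have h1 := taylorx u hu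
    have h2 : |⟪w, u - x⟫| ≤ W * ‖u - x‖ := by
      rw [hWdef]; exact abs_real_inner_le_norm w (u - x)
    have h3 : ‖u - x‖ ≤ r₀ := by rwa [mem_closedBall, dist_eq_norm] at hu
    have h4 := abs_sub_abs_le_abs_sub (ψ u) ⟪w, u - x⟫
    have h5 : K * ‖u - x‖ ^ 2 ≤ K * r₀ * ‖u - x‖ := by
      have hh := mul_le_mul_of_nonneg_right h3 (norm_nonneg (u - x))
      nlinarith only [hh, hK]
    rw [hLdef]
    linarith only [h1, h2, h4, h5]
  -- descent estimate
  have descent : ∀ u ∈ closedBall x δ, ∀ s : ℝ, 0 ≤ s → s ≤ s₀ →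
      ψ (u - s • w) ≤ ψ u - s * (W ^ 2 / 2) ∧ u - s • w ∈ closedBall x r₀ := by
    intro u hu s hs hss₀
    have hu' : u ∈ closedBall x r₀ := by
      rw [mem_closedBall] at hu ⊢; linarith only [hu, hδr₀, hr₀]
    have hux : ‖u - x‖ ≤ δ := by rwa [mem_closedBall, dist_eq_norm] at hu
    have hy : u - s • w ∈ closedBall x r₀ := by
      rw [mem_closedBall, dist_eq_norm]
      have : u - s • w - x = (u - x) - s • w := by abel
      rw [this]
      calc ‖(u - x) - s • w‖ ≤ ‖u - x‖ + ‖s • w‖ := norm_sub_le _ _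
        _ = ‖u - x‖ + s * W := by rw [norm_smul, Real.norm_eq_abs, abs_of_nonneg hs, hWn]
        _ ≤ r₀ / 2 + r₀ / 2 := by
              have hsW := mul_le_mul_of_nonneg_right hss₀ hW.le
              linarith only [hux, hδr₀, hs₀W, hsW]
        _ = r₀ := by ring
    refine ⟨?_, hy⟩
    have htay := taylor u hu' (u - s • w) hy
    have heq : u - s • w - u = -(s • w) := by abel
    rw [heq] at htay
    have heval : fderiv ℝ ψ u (-(s • w)) = -(s * fderiv ℝ ψ u w) := by
      rw [map_neg, map_smul, smul_eq_mul]
    rw [heval] at htay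
    have hnorm : ‖-(s • w)‖ = s * W := by
      rw [norm_neg, norm_smul, Real.norm_eq_abs, abs_of_nonneg hs, hWn]
    rw [hnorm] at htay
    -- lower bound for fderiv ψ u w
    have hlow : W ^ 2 - K * ‖u - x‖ * W ≤ fderiv ℝ ψ u w := by
      have h1 : |(fderiv ℝ ψ u - fderiv ℝ ψ x) w| ≤ ‖fderiv ℝ ψ u - fderiv ℝ ψ x‖ * W := by
        rw [hWdef]; exact (fderiv ℝ ψ u - fderiv ℝ ψ x).le_opNorm w
      have h2 : ‖fderiv ℝ ψ u - fderiv ℝ ψ x‖ ≤ K * ‖u - x‖ :=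
        hlip' u hu' x (mem_closedBall_self hr₀.le)
      have h3 : (fderiv ℝ ψ u - fderiv ℝ ψ x) w = fderiv ℝ ψ u w - ⟪w, w⟫ := by
        rw [ContinuousLinearMap.sub_apply, hfd]
      rw [h3, hWw] at h1
      have h5 : ‖fderiv ℝ ψ u - fderiv ℝ ψ x‖ * W ≤ K * ‖u - x‖ * W :=
        mul_le_mul_of_nonneg_right h2 hW.le
      have h6 := abs_le.1 h1
      linarith only [h6.1, h5]
    have habs := abs_le.1 htay
    have key1 : K * ‖u - x‖ ≤ W / 4 := by
      have h7 : K * ‖u - x‖ ≤ K * δ := mul_le_mul_of_nonneg_left hux hK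
      linarith only [h7, hKδ]
    have key2 : K * s ≤ 1 / 4 := by
      have h7 : K * s ≤ K * s₀ := mul_le_mul_of_nonneg_left hss₀ hK
      linarith only [h7, hKs₀]
    have step2 : s * (W ^ 2 - K * ‖u - x‖ * W) ≤ s * fderiv ℝ ψ u w :=
      mul_le_mul_of_nonneg_left hlow hs
    have p1 : (s * W) * (K * ‖u - x‖) ≤ (s * W) * (W / 4) :=
      mul_le_mul_of_nonneg_left key1 (mul_nonneg hs hW.le)
    have p2 : (K * s) * (s * W ^ 2) ≤ (1/4) * (s * W ^ 2) :=
      mul_le_mul_of_nonneg_right key2 (by positivity)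
    nlinarith only [habs.2, step2, p1, p2]
  -- key lemma: near x, ψ < 0 implies interior
  have hballU : ball x δ ⊆ closedBall x r₀ := fun z hz => by
    rw [mem_closedBall]; rw [mem_ball] at hz; linarith only [hz, hδr₀, hr₀]
  have keyA : ∀ y ∈ ball x δ, ψ y < 0 → y ∈ interior S := by
    intro y hyδ hyneg
    by_contra hyint
    have hyU : y ∈ U := hsubU (hballU hyδ)
    have hyS : y ∉ S := by
      intro hyS
      have hyfr : y ∈ frontier S := hfr ▸ ⟨hyS, hyint⟩
      have h0 : y ∈ U ∩ ψ ⁻¹' {0} := hlevel ▸ ⟨hyU, hyfr⟩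
      exact absurd h0.2 (ne_of_lt hyneg)
    obtain ⟨p, hpδ, hpint⟩ := hmeet (ball x δ) (ball_mem_nhds x hδ)
      (fun z hz => hsubU (hballU hz))
    have hpU : p ∈ U := hsubU (hballU hpδ)
    have hpS : p ∈ S := interior_subset hpint
    have hpneg : ψ p < 0 := by
      rcases lt_or_eq_of_le (hneg p ⟨hpU, hpS⟩) with h | h
      · exact h
      · exfalso
        have h0 : p ∈ U ∩ frontier S := hlevel ▸ ⟨hpU, h⟩
        rw [hfr] at h0
        exact h0.2.2 hpint
    -- generic facts about the three segments
    have hdesc : ∀ u ∈ ball x δ, ∀ z ∈ segment ℝ u (u - s₀ • w),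
        ψ z ≤ ψ u ∧ z ∈ closedBall x r₀ := by
      intro u hu z hz
      obtain ⟨a, b, ha, hb, hab, rfl⟩ := hz
      have hzeq : a • u + b • (u - s₀ • w) = u - (b * s₀) • w := by
        have : a = 1 - b := by linarith
        subst this; module
      rw [hzeq]
      have hbs : 0 ≤ b * s₀ := mul_nonneg hb hs₀.le
      have hbs' : b * s₀ ≤ s₀ := by nlinarith only [ha, hb, hab, hs₀.le]
      obtain ⟨hd1, hd2⟩ := descent u (ball_subset_closedBall hu) (b * s₀) hbs hbs'
      refine ⟨?_, hd2⟩
      linarith only [hd1, mul_nonneg hbs (sq_nonneg W)]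
    have hmid : ∀ z ∈ segment ℝ (y - s₀ • w) (p - s₀ • w),
        ψ z < 0 ∧ z ∈ closedBall x r₀ := by
      intro z hz
      obtain ⟨a, b, ha, hb, hab, rfl⟩ := hz
      have hzeq : a • (y - s₀ • w) + b • (p - s₀ • w) = (a • y + b • p) - s₀ • w := by
        have : a = 1 - b := by linarith
        subst this; module
      rw [hzeq]
      have hu : a • y + b • p ∈ ball x δ := (convex_ball x δ) hyδ hpδ ha hb hab
      obtain ⟨hd1, hd2⟩ := descent (a • y + b • p) (ball_subset_closedBall hu) s₀ hs₀.le le_rfl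
      refine ⟨?_, hd2⟩
      have h2 := (abs_le.1 (linψ _ (hballU hu))).2
      have h3 : ‖(a • y + b • p) - x‖ ≤ δ := by
        have h7 := mem_ball_iff_norm.1 hu; linarith only [h7]
      have h4 : L * ‖(a • y + b • p) - x‖ ≤ L * δ := mul_le_mul_of_nonneg_left h3 hL.le
      linarith only [hd1, h2, h4, hLδ, mul_pos hs₀ (pow_pos hW 2)]
    -- the path
    have hPneg : ∀ z ∈ segment ℝ y (y - s₀ • w) ∪ segment ℝ (y - s₀ • w) (p - s₀ • w)
        ∪ segment ℝ (p - s₀ • w) p, ψ z < 0 ∧ z ∈ closedBall x r₀ := by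
      intro z hz
      rcases hz with (hz | hz) | hz
      · obtain ⟨hd1, hd2⟩ := hdesc y hyδ z hz
        exact ⟨lt_of_le_of_lt hd1 hyneg, hd2⟩
      · exact hmid z hz
      · have hz' : z ∈ segment ℝ p (p - s₀ • w) := by rwa [segment_symm]
        obtain ⟨hd1, hd2⟩ := hdesc p hpδ z hz'
        exact ⟨lt_of_le_of_lt hd1 hpneg, hd2⟩
    have hcover : segment ℝ y (y - s₀ • w) ∪ segment ℝ (y - s₀ • w) (p - s₀ • w)
        ∪ segment ℝ (p - s₀ • w) p ⊆ Sᶜ ∪ interior S := by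
      intro z hz
      obtain ⟨hzneg, hzball⟩ := hPneg z hz
      by_cases hzS : z ∈ S
      · right
        by_contra hzint
        have hzfr : z ∈ frontier S := hfr ▸ ⟨hzS, hzint⟩
        have h0 : z ∈ U ∩ ψ ⁻¹' {0} := hlevel ▸ ⟨hsubU hzball, hzfr⟩
        exact absurd h0.2 (ne_of_lt hzneg)
      · exact Or.inl hzS
    have hc1 : IsPreconnected (segment ℝ y (y - s₀ • w)) :=
      (convex_segment _ _).isPreconnected
    have hc2 : IsPreconnected (segment ℝ (y - s₀ • w) (p - s₀ • w)) :=
      (convex_segment _ _).isPreconnected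
    have hc3 : IsPreconnected (segment ℝ (p - s₀ • w) p) :=
      (convex_segment _ _).isPreconnected
    have hc12 : IsPreconnected (segment ℝ y (y - s₀ • w)
        ∪ segment ℝ (y - s₀ • w) (p - s₀ • w)) :=
      IsPreconnected.union (y - s₀ • w) (right_mem_segment ℝ _ _)
        (left_mem_segment ℝ _ _) hc1 hc2
    have hcP : IsPreconnected (segment ℝ y (y - s₀ • w)
        ∪ segment ℝ (y - s₀ • w) (p - s₀ • w) ∪ segment ℝ (p - s₀ • w) p) :=
      IsPreconnected.union (p - s₀ • w) (Or.inr (right_mem_segment ℝ _ _))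
        (left_mem_segment ℝ _ _) hc12 hc3
    obtain ⟨z, hzP, hzC, hzI⟩ := hcP Sᶜ (interior S) hS.isOpen_compl isOpen_interior hcover
      ⟨y, Or.inl (Or.inl (left_mem_segment ℝ _ _)), hyS⟩
      ⟨p, Or.inr (right_mem_segment ℝ _ _), hpint⟩
    exact hzC (interior_subset hzI)
  -- nonnegativity of ψ on the complement side near x
  have hψge : ∀ y ∈ ball x δ, y ∈ Sᶜ ∪ frontier S → 0 ≤ ψ y := by
    intro y hy hyS
    by_contra hneg'
    push_neg at hneg'
    have hyint := keyA y hy hneg'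
    rcases hyS with hyc | hyfr
    · exact hyc (interior_subset hyint)
    · have h0 : y ∈ U ∩ ψ ⁻¹' {0} := hlevel ▸ ⟨hsubU (hballU hy), hyfr⟩
      exact absurd h0.2 (ne_of_lt hneg')
  ext ξ
  simp only [proxNormalCone, Set.mem_setOf_eq, ← hwdef]
  constructor
  · rintro ⟨σ, hσ, V, hV, hVle⟩
    obtain ⟨ρ, hρ, hρV⟩ := Metric.mem_nhds_iff.1 hV
    have claimw : ⟪ξ, w⟫ ≤ 0 := by
      by_contra hpos
      push_neg at hpos
      obtain ⟨τ, hτdef⟩ : ∃ τ : ℝ, τ = min (min (1/(2*(K+1))) (r₀/(2*W)))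
        (min (ρ/(2*W)) (⟪ξ, w⟫/(2*(σ*W^2+1)))) := ⟨_, rfl⟩
      have hτ : 0 < τ := by
        rw [hτdef]
        exact lt_min (lt_min (by positivity) (by positivity))
          (lt_min (by positivity) (div_pos hpos (by positivity)))
      have hτK : τ ≤ 1/(2*(K+1)) := by
        rw [hτdef]; exact le_trans (min_le_left _ _) (min_le_left _ _)
      have hτr : τ ≤ r₀/(2*W) := by
        rw [hτdef]; exact le_trans (min_le_left _ _) (min_le_right _ _)
      have hτρ : τ ≤ ρ/(2*W) := by
        rw [hτdef]; exact le_trans (min_le_right _ _) (min_le_left _ _)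
      have hτξ : τ ≤ ⟪ξ, w⟫/(2*(σ*W^2+1)) := by
        rw [hτdef]; exact le_trans (min_le_right _ _) (min_le_right _ _)
      have hyx : (x + τ • w) - x = τ • w := by abel
      have hynorm : ‖(x + τ • w) - x‖ = τ * W := by
        rw [hyx, norm_smul, Real.norm_eq_abs, abs_of_nonneg hτ.le, hWn]
      have hyball : x + τ • w ∈ closedBall x r₀ := by
        rw [mem_closedBall, dist_eq_norm, hynorm]
        calc τ * W ≤ (r₀/(2*W)) * W := mul_le_mul_of_nonneg_right hτr hW.le
          _ = r₀ / 2 := by field_simp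
          _ ≤ r₀ := by linarith only [hr₀]
      have hyU : x + τ • w ∈ U := hsubU hyball
      have hψy : 0 < ψ (x + τ • w) := by
        have h1 := (abs_le.1 (taylorx _ hyball)).1
        have h2 : ⟪w, (x + τ • w) - x⟫ = τ * W^2 := by
          rw [hyx, real_inner_smul_right, hWw]
        rw [h2, hynorm] at h1
        have hKτ : K * τ ≤ 1/2 := by
          have h4 : (0:ℝ) < 2*(K+1) := by positivity
          have h5 := hτK
          rw [le_div_iff₀ h4] at h5
          linarith only [h5, hτ.le]
        have q1 : K * τ * (τ * W^2) ≤ 1/2 * (τ * W^2) :=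
          mul_le_mul_of_nonneg_right hKτ (mul_nonneg hτ.le (sq_nonneg W))
        have q2 : (0:ℝ) < τ * W^2 := mul_pos hτ (pow_pos hW 2)
        nlinarith only [h1, q1, q2]
      have hyS : x + τ • w ∈ Sᶜ := fun hyS => absurd (hneg _ ⟨hyU, hyS⟩) (not_le.2 hψy)
      have hyV : x + τ • w ∈ V := by
        apply hρV
        rw [mem_ball, dist_eq_norm, hynorm]
        calc τ * W ≤ (ρ/(2*W)) * W := mul_le_mul_of_nonneg_right hτρ hW.le
          _ = ρ / 2 := by field_simp
          _ < ρ := by linarith only [hρ]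
      have hle := hVle _ ⟨Or.inl hyS, hyV⟩
      rw [hynorm, hyx, real_inner_smul_right] at hle
      have hτξ' : τ * (2*(σ*W^2+1)) ≤ ⟪ξ, w⟫ := by
        rw [le_div_iff₀ (by positivity)] at hτξ; exact hτξ
      have hp : τ * (τ * (2*(σ*W^2+1))) ≤ τ * ⟪ξ, w⟫ :=
        mul_le_mul_of_nonneg_left hτξ' hτ.le
      have hr1 : (0:ℝ) ≤ σ * τ^2 * W^2 :=
        mul_nonneg (mul_nonneg hσ.le (sq_nonneg τ)) (sq_nonneg W)
      have hr2 : (0:ℝ) < τ^2 := pow_pos hτ 2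
      nlinarith only [hle, hp, hr1, hr2]
    have claimv : ∀ v : E, ⟪w, v⟫ = 0 → ⟪ξ, v⟫ ≤ 0 := by
      intro v hv
      by_contra hpos
      push_neg at hpos
      obtain ⟨N, hNdef⟩ : ∃ N : ℝ, N = ‖v‖ + 1 := ⟨_, rfl⟩
      have hN : 0 < N := by rw [hNdef]; positivity
      have hNv : ‖v‖ ≤ N := by rw [hNdef]; linarith only []
      obtain ⟨c, hcdef⟩ : ∃ c : ℝ, c = (K * N^2 + 1)/W^2 := ⟨_, rfl⟩
      have hc : 0 < c := by rw [hcdef]; positivity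
      have hcW : c * W^2 = K * N^2 + 1 := by
        rw [hcdef, div_mul_cancel₀ _ (pow_ne_zero 2 (ne_of_gt hW))]
      obtain ⟨M, hMdef⟩ : ∃ M : ℝ, M = σ * N^2 + c * |⟪ξ, w⟫| + 1 := ⟨_, rfl⟩
      have hM : 0 < M := by
        rw [hMdef]
        have := abs_nonneg ⟪ξ, w⟫
        linarith only [mul_nonneg hσ.le (sq_nonneg N), mul_nonneg hc.le (abs_nonneg ⟪ξ, w⟫)]
      obtain ⟨τ, hτdef⟩ :
          ∃ τ : ℝ, τ = min (min (1/(c*W+1)) (r₀/N)) (min (ρ/(2*N)) (⟪ξ, v⟫/(2*M))) := ⟨_, rfl⟩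
      have hτ : 0 < τ := by
        rw [hτdef]
        exact lt_min (lt_min (by positivity) (by positivity))
          (lt_min (by positivity) (div_pos hpos (by positivity)))
      have hτc : τ ≤ 1/(c*W+1) := by
        rw [hτdef]; exact le_trans (min_le_left _ _) (min_le_left _ _)
      have hτr : τ ≤ r₀/N := by
        rw [hτdef]; exact le_trans (min_le_left _ _) (min_le_right _ _)
      have hτρ : τ ≤ ρ/(2*N) := by
        rw [hτdef]; exact le_trans (min_le_right _ _) (min_le_left _ _)
      have hτξ : τ ≤ ⟪ξ, v⟫/(2*M) := by
        rw [hτdef]; exact le_trans (min_le_right _ _) (min_le_right _ _)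
      have hcτW : c * τ * W ≤ 1 := by
        rw [le_div_iff₀ (by positivity)] at hτc
        linarith only [hτc, hτ.le]
      have hyx : (x + τ • v + (c * τ^2) • w) - x = τ • v + (c * τ^2) • w := by abel
      have hnorm1 : ‖(x + τ • v + (c * τ^2) • w) - x‖ ≤ τ * N := by
        rw [hyx]
        calc ‖τ • v + (c*τ^2) • w‖ ≤ ‖τ • v‖ + ‖(c*τ^2) • w‖ := norm_add_le _ _
          _ = τ * ‖v‖ + c * τ^2 * W := by
              rw [norm_smul, norm_smul, Real.norm_eq_abs, Real.norm_eq_abs,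
                abs_of_nonneg hτ.le, abs_of_nonneg (mul_nonneg hc.le (sq_nonneg τ)), hWn]
          _ ≤ τ * N := by
              rw [hNdef]
              linarith only [mul_le_mul_of_nonneg_left hcτW hτ.le]
      have hτN : τ * N ≤ r₀ := by
        rw [le_div_iff₀ hN] at hτr; exact hτr
      have hyball : x + τ • v + (c * τ^2) • w ∈ closedBall x r₀ := by
        rw [mem_closedBall, dist_eq_norm]; linarith only [hnorm1, hτN]
      have hyU : x + τ • v + (c * τ^2) • w ∈ U := hsubU hyball
      have hψy : 0 < ψ (x + τ • v + (c * τ^2) • w) := by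
        have h1 := (abs_le.1 (taylorx _ hyball)).1
        have h2 : ⟪w, (x + τ • v + (c * τ^2) • w) - x⟫ = c * τ^2 * W^2 := by
          rw [hyx, inner_add_right, real_inner_smul_right, real_inner_smul_right, hv, hWw]
          ring
        rw [h2] at h1
        have h3 : K * ‖(x + τ • v + (c * τ^2) • w) - x‖^2 ≤ K * (τ*N)^2 := by
          have q4 : ‖(x + τ • v + (c * τ^2) • w) - x‖^2 ≤ (τ*N)^2 := by
            nlinarith only [hnorm1, norm_nonneg ((x + τ • v + (c * τ^2) • w) - x)]
          exact mul_le_mul_of_nonneg_left q4 hK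
        have q : c * τ^2 * W^2 = K * (τ*N)^2 + τ^2 := by
          rw [show c * τ^2 * W^2 = (c * W^2) * τ^2 by ring, hcW]; ring
        linarith only [h1, h3, q, pow_pos hτ 2]
      have hyS : x + τ • v + (c * τ^2) • w ∈ Sᶜ :=
        fun hyS => absurd (hneg _ ⟨hyU, hyS⟩) (not_le.2 hψy)
      have hyV : x + τ • v + (c * τ^2) • w ∈ V := by
        apply hρV
        rw [mem_ball, dist_eq_norm]
        have h5 : τ * N ≤ ρ/2 := by
          rw [le_div_iff₀ (by positivity)] at hτρ; linarith only [hτρ]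
        linarith only [hnorm1, h5, hρ]
      have hle := hVle _ ⟨Or.inl hyS, hyV⟩
      rw [hyx, inner_add_right, real_inner_smul_right, real_inner_smul_right] at hle
      have hnorm1' : ‖τ • v + (c * τ^2) • w‖ ≤ τ * N := by rw [← hyx]; exact hnorm1
      have h5 : σ * ‖τ • v + (c * τ^2) • w‖^2 ≤ σ * (τ*N)^2 := by
        have q4 : ‖τ • v + (c * τ^2) • w‖^2 ≤ (τ*N)^2 := by
          nlinarith only [hnorm1', norm_nonneg (τ • v + (c * τ^2) • w)]
        exact mul_le_mul_of_nonneg_left q4 hσ.le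
      have h6 : τ * ⟪ξ, v⟫ ≤ σ * (τ*N)^2 + c*τ^2*|⟪ξ, w⟫| := by
        have h7 : -(c*τ^2*⟪ξ, w⟫) ≤ c*τ^2*|⟪ξ, w⟫| := by
          have h8 := mul_le_mul_of_nonneg_left (neg_abs_le ⟪ξ, w⟫) (mul_nonneg hc.le (sq_nonneg τ))
          linarith only [h8]
        linarith only [hle, h5, h7]
      have h10 : τ * (2*M) ≤ ⟪ξ, v⟫ := by
        rw [le_div_iff₀ (by positivity)] at hτξ; exact hτξ
      have h10' : τ * (τ * (2*M)) ≤ τ * ⟪ξ, v⟫ := mul_le_mul_of_nonneg_left h10 hτ.le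
      have hMexp : τ * (τ * (2*M)) = 2*σ*τ^2*N^2 + 2*c*τ^2*|⟪ξ, w⟫| + 2*τ^2 := by
        rw [hMdef]; ring
      have r1 : (0:ℝ) ≤ σ * τ^2 * N^2 :=
        mul_nonneg (mul_nonneg hσ.le (sq_nonneg τ)) (sq_nonneg N)
      have r2 : (0:ℝ) ≤ c * τ^2 * |⟪ξ, w⟫| :=
        mul_nonneg (mul_nonneg hc.le (sq_nonneg τ)) (abs_nonneg _)
      have r3 : (0:ℝ) < τ^2 := pow_pos hτ 2
      linarith only [h6, h10', hMexp, r1, r2, r3]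
    -- conclude ξ is a nonnegative multiple of -w
    have hW2 : (0:ℝ) < W^2 := pow_pos hW 2
    have ha : ⟪ξ, w⟫ / W^2 ≤ 0 := div_nonpos_of_nonpos_of_nonneg claimw (sq_nonneg W)
    have haW : (⟪ξ, w⟫ / W^2) * W^2 = ⟪ξ, w⟫ := by field_simp
    have hperp : ⟪w, ξ - (⟪ξ, w⟫ / W^2) • w⟫ = 0 := by
      rw [inner_sub_right, real_inner_smul_right, hWw, haW,
        real_inner_comm w ξ, sub_self]
    have h1 := claimv _ hperp
    have h2 := claimv (-(ξ - (⟪ξ, w⟫ / W^2) • w)) (by rw [inner_neg_right, hperp, neg_zero])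
    rw [inner_neg_right] at h2
    have h3 : ⟪ξ, ξ - (⟪ξ, w⟫ / W^2) • w⟫ = 0 := le_antisymm h1 (by linarith only [h2])
    have h4 : ⟪ξ - (⟪ξ, w⟫ / W^2) • w, ξ - (⟪ξ, w⟫ / W^2) • w⟫ = (0:ℝ) := by
      rw [inner_sub_left, real_inner_smul_left, h3, hperp]
      ring
    have h5 : ξ - (⟪ξ, w⟫ / W^2) • w = 0 := inner_self_eq_zero.1 h4
    refine ⟨-(⟪ξ, w⟫ / W^2), by linarith only [ha], ?_⟩
    have h6 : ξ = (⟪ξ, w⟫ / W^2) • w := by rwa [sub_eq_zero] at h5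
    conv_lhs => rw [h6]
    rw [neg_smul, smul_neg, neg_neg]
  · rintro ⟨l, hl, rfl⟩
    refine ⟨l * K + 1, by linarith only [mul_nonneg hl hK], ball x δ, ball_mem_nhds x hδ, ?_⟩
    rintro y ⟨hyS, hyδ⟩
    have hψy : 0 ≤ ψ y := hψge y hyδ hyS
    have h1 := (abs_le.1 (taylorx y (hballU hyδ))).2
    have h2 : ⟪l • (-w), y - x⟫ = l * -⟪w, y - x⟫ := by
      rw [real_inner_smul_left, inner_neg_left]
    rw [h2]
    have h3 : -⟪w, y - x⟫ ≤ K * ‖y - x‖^2 := by linarith only [h1, hψy]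
    have h4 : l * -⟪w, y - x⟫ ≤ l * (K * ‖y - x‖^2) := mul_le_mul_of_nonneg_left h3 hl
    linarith only [h4, sq_nonneg ‖y - x‖]
end

section
/- Let S ⊆ E be a closed prox-regular set whose boundary ∂S is a C² embedded submanifold of E, let x ∈ ∂S, and let U, ψ witness this near x (ψ : U → ℝ^k a C² map with surjective derivative at each point of U and U ∩ ∂S = ψ⁻¹(0)). Set Ŝ := (E \ S) ∪ ∂S. Then T^B_S(x) ∩ T^B_Ŝ(x) = ker Dψ(x) = T_x∂S. -/
open Filter Topology Metric Set
open scoped RealInnerProductSpace NNReal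

variable {E : Type*} [NormedAddCommGroup E] [InnerProductSpace ℝ E]

/-- A local C² defining chart for the boundary of `S` at `z`:
an open neighborhood `U` and a C² map `ψ : U → ℝ^k` with surjective derivative at
each point of `U` such that `U ∩ ∂S = ψ⁻¹(0)`. -/
def IsBoundaryChart (S : Set E) (z : E) (k : ℕ) (U : Set E) (ψ : E → (Fin k → ℝ)) : Prop :=
  IsOpen U ∧ z ∈ U ∧ ContDiffOn ℝ 2 ψ U ∧
    (∀ u ∈ U, Function.Surjective (fderiv ℝ ψ u)) ∧
    U ∩ frontier S = U ∩ ψ ⁻¹' {0}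

/-- The boundary of `S` is a C² embedded submanifold of `E`. -/
def BoundaryC2Submanifold (S : Set E) : Prop :=
  ∀ z ∈ frontier S, ∃ (k : ℕ) (U : Set E) (ψ : E → (Fin k → ℝ)), IsBoundaryChart S z k U ψ

/-- If `ψ` is differentiable at `x` and vanishes on `U ∩ A`, then any Bouligand tangent
vector of `A` at `x` lies in the kernel of the derivative. -/
lemma aux_mem_ker_of_bouligand {k : ℕ} {ψ : E → Fin k → ℝ} {x : E} {A U : Set E}
    (hU : IsOpen U) (hxU : x ∈ U) (hψ : HasFDerivAt ψ (fderiv ℝ ψ x) x)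
    (hzero : ∀ y ∈ U ∩ A, ψ y = 0) (hxA : x ∈ A) {v : E}
    (hv : v ∈ bouligandCone A x) : fderiv ℝ ψ x v = 0 := by
  obtain ⟨z, t, hz, ht, hzx, ht0, hq⟩ := hv
  set D := fderiv ℝ ψ x with hDdef
  have hψx : ψ x = 0 := hzero x ⟨hxU, hxA⟩
  have hlo : (fun y => ψ y - ψ x - D (y - x)) =o[𝓝 x] fun y => y - x :=
    hψ.isLittleO
  have h1 : (fun i => ψ (z i) - ψ x - D (z i - x)) =o[atTop] fun i => z i - x :=
    hlo.comp_tendsto hzx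
  have hU' : ∀ᶠ i in atTop, z i ∈ U := hzx.eventually (hU.eventually_mem hxU)
  have h2 : (fun i => -D (z i - x)) =o[atTop] fun i => z i - x := by
    refine h1.congr' ?_ EventuallyEq.rfl
    filter_upwards [hU'] with i hiU
    rw [hzero (z i) ⟨hiU, hz i⟩, hψx]
    simp
  have h3 : (fun i => (t i)⁻¹ • (-D (z i - x))) =o[atTop]
      fun i => (t i)⁻¹ • (z i - x) :=
    (Asymptotics.isBigO_refl (fun i => (t i)⁻¹) atTop).smul_isLittleO h2
  have h4 : Tendsto (fun i => (t i)⁻¹ • (-D (z i - x))) atTop (𝓝 0) :=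
    (Asymptotics.isLittleO_one_iff ℝ).mp (h3.trans_isBigO (hq.isBigO_one ℝ))
  have h5 : Tendsto (fun i => (t i)⁻¹ • (-D (z i - x))) atTop (𝓝 (-D v)) := by
    have h6 : Tendsto (fun i => -D ((t i)⁻¹ • (z i - x))) atTop (𝓝 (-D v)) :=
      ((D.continuous.tendsto v).comp hq).neg
    refine h6.congr fun i => ?_
    rw [map_smul, smul_neg]
  have : -D v = 0 := tendsto_nhds_unique h5 h4
  simpa [neg_eq_zero] using this

/-- A common Bouligand tangent vector of `S` and of `Sᶜ ∪ ∂S` is a Bouligand tangent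
vector of `∂S`. -/
lemma aux_inter_subset_frontier (S : Set E) (hS : IsClosed S) (x : E) :
    bouligandCone S x ∩ bouligandCone (Sᶜ ∪ frontier S) x ⊆ bouligandCone (frontier S) x := by
  rintro v ⟨⟨z, t, hz, ht, hzx, ht0, hzq⟩, ⟨w, τ, hw, hτ, hwx, hτ0, hwq⟩⟩
  have key : ∀ i, ∃ a b : ℝ, 0 ≤ a ∧ 0 ≤ b ∧ a + b = 1 ∧
      a • z i + b • w i ∈ frontier S := by
    intro i
    rcases hw i with hwc | hwf
    · by_cases hzf : z i ∈ frontier S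
      · exact ⟨1, 0, by norm_num, le_refl _, by norm_num, by simpa using hzf⟩
      · have hzint : z i ∈ interior S := by
          have hfr := hS.frontier_eq
          by_contra hzi
          exact hzf (hfr ▸ ⟨hz i, hzi⟩)
        by_contra hcon
        push_neg at hcon
        have hfr : ∀ p ∈ segment ℝ (z i) (w i), p ∉ frontier S := by
          rintro p ⟨a, b, ha, hb, hab, rfl⟩ hp
          exact hcon a b ha hb hab hp
        have hsub : segment ℝ (z i) (w i) ⊆ interior S ∪ Sᶜ := by
          intro p hp
          by_cases hpS : p ∈ S
          · left
            by_contra hpint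
            exact hfr p hp (hS.frontier_eq ▸ ⟨hpS, hpint⟩)
          · exact Or.inr hpS
        obtain ⟨p, _, hpint, hpc⟩ :=
          (convex_segment (z i) (w i)).isPreconnected (interior S) Sᶜ
            isOpen_interior hS.isOpen_compl hsub
            ⟨z i, left_mem_segment ℝ _ _, hzint⟩
            ⟨w i, right_mem_segment ℝ _ _, hwc⟩
        exact hpc (interior_subset hpint)
    · exact ⟨0, 1, le_refl _, by norm_num, by norm_num, by simpa using hwf⟩
  choose a b ha hb hab hy using key
  set y : ℕ → E := fun i => a i • z i + b i • w i with hydef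
  set s : ℕ → ℝ := fun i => a i * t i + b i * τ i with hsdef
  have hs0 : ∀ i, 0 < s i := by
    intro i
    have hab' : 0 < a i ∨ 0 < b i := by
      by_contra hcon
      push_neg at hcon
      have h1 : a i = 0 := le_antisymm hcon.1 (ha i)
      have h2 : b i = 0 := le_antisymm hcon.2 (hb i)
      have := hab i
      rw [h1, h2] at this
      norm_num at this
    rcases hab' with h | h
    · exact add_pos_of_pos_of_nonneg (mul_pos h (ht i))
        (mul_nonneg (hb i) (hτ i).le)
    · exact add_pos_of_nonneg_of_pos (mul_nonneg (ha i) (ht i).le)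
        (mul_pos h (hτ i))
  have ha1 : ∀ i, a i ≤ 1 := fun i => by nlinarith [hb i, hab i]
  have hb1 : ∀ i, b i ≤ 1 := fun i => by nlinarith [ha i, hab i]
  have hs_le : ∀ i, s i ≤ t i + τ i := by
    intro i
    have h1 : a i * t i ≤ t i := by nlinarith [ht i, ha i, ha1 i]
    have h2 : b i * τ i ≤ τ i := by nlinarith [hτ i, hb i, hb1 i]
    simpa [s] using add_le_add h1 h2
  have hst : Tendsto s atTop (𝓝 0) := by
    have := squeeze_zero (fun i => (hs0 i).le) hs_le (by simpa using ht0.add hτ0)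
    exact this
  have hkey : ∀ i, (s i)⁻¹ • (y i - x) - v =
      ((s i)⁻¹ * (a i * t i)) • ((t i)⁻¹ • (z i - x) - v)
      + ((s i)⁻¹ * (b i * τ i)) • ((τ i)⁻¹ • (w i - x) - v) := by
    intro i
    have htne : t i ≠ 0 := (ht i).ne'
    have hτne : τ i ≠ 0 := (hτ i).ne'
    have hsne : s i ≠ 0 := (hs0 i).ne'
    have hsum : (s i)⁻¹ * (a i * t i) + (s i)⁻¹ * (b i * τ i) = 1 := by
      rw [← mul_add]
      exact inv_mul_cancel₀ hsne
    have hax : a i • x + b i • x = x := by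
      rw [← add_smul, hab i, one_smul]
    have hyx : y i - x = a i • (z i - x) + b i • (w i - x) := by
      have hcalc : a i • (z i - x) + b i • (w i - x)
          = a i • z i + b i • w i - (a i • x + b i • x) := by
        rw [smul_sub, smul_sub]; abel
      rw [hcalc, hax]
    have e1 : (s i)⁻¹ * (a i * t i) * (t i)⁻¹ = (s i)⁻¹ * a i := by
      field_simp
    have e2 : (s i)⁻¹ * (b i * τ i) * (τ i)⁻¹ = (s i)⁻¹ * b i := by
      field_simp
    have e3 : ((s i)⁻¹ * (a i * t i)) • v + ((s i)⁻¹ * (b i * τ i)) • v = v := by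
      rw [← add_smul, hsum, one_smul]
    have r1 : ((s i)⁻¹ * (a i * t i)) • ((t i)⁻¹ • (z i - x) - v)
        = ((s i)⁻¹ * a i) • (z i - x) - ((s i)⁻¹ * (a i * t i)) • v := by
      rw [smul_sub, smul_smul, e1]
    have r2 : ((s i)⁻¹ * (b i * τ i)) • ((τ i)⁻¹ • (w i - x) - v)
        = ((s i)⁻¹ * b i) • (w i - x) - ((s i)⁻¹ * (b i * τ i)) • v := by
      rw [smul_sub, smul_smul, e2]
    rw [hyx, smul_add, smul_smul, smul_smul, r1, r2]
    conv_lhs => rw [show v = ((s i)⁻¹ * (a i * t i)) • v + ((s i)⁻¹ * (b i * τ i)) • v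
      from e3.symm]
    abel
  have hnorm : ∀ i, ‖(s i)⁻¹ • (y i - x) - v‖ ≤
      ‖(t i)⁻¹ • (z i - x) - v‖ + ‖(τ i)⁻¹ • (w i - x) - v‖ := by
    intro i
    rw [hkey i]
    refine (norm_add_le _ _).trans (add_le_add ?_ ?_)
    · rw [norm_smul]
      refine mul_le_of_le_one_left (norm_nonneg _) ?_
      rw [Real.norm_eq_abs, abs_of_nonneg
        (mul_nonneg (inv_nonneg.2 (hs0 i).le) (mul_nonneg (ha i) (ht i).le))]
      rw [inv_mul_le_iff₀ (hs0 i), mul_one]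
      exact le_add_of_nonneg_right (mul_nonneg (hb i) (hτ i).le)
    · rw [norm_smul]
      refine mul_le_of_le_one_left (norm_nonneg _) ?_
      rw [Real.norm_eq_abs, abs_of_nonneg
        (mul_nonneg (inv_nonneg.2 (hs0 i).le) (mul_nonneg (hb i) (hτ i).le))]
      rw [inv_mul_le_iff₀ (hs0 i), mul_one]
      exact le_add_of_nonneg_left (mul_nonneg (ha i) (ht i).le)
  have hq : Tendsto (fun i => (s i)⁻¹ • (y i - x)) atTop (𝓝 v) := by
    rw [tendsto_iff_norm_sub_tendsto_zero]
    refine squeeze_zero (fun i => norm_nonneg _) hnorm ?_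
    have h1 : Tendsto (fun i => ‖(t i)⁻¹ • (z i - x) - v‖) atTop (𝓝 0) := by
      rw [← tendsto_iff_norm_sub_tendsto_zero]
      exact hzq
    have h2 : Tendsto (fun i => ‖(τ i)⁻¹ • (w i - x) - v‖) atTop (𝓝 0) := by
      rw [← tendsto_iff_norm_sub_tendsto_zero]
      exact hwq
    simpa using h1.add h2
  have hyx : Tendsto y atTop (𝓝 x) := by
    have h1 : Tendsto (fun i => s i • ((s i)⁻¹ • (y i - x)) + x) atTop
        (𝓝 ((0 : ℝ) • v + x)) := (hst.smul hq).add tendsto_const_nhds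
    simp only [zero_smul, zero_add] at h1
    refine h1.congr fun i => ?_
    rw [smul_inv_smul₀ (hs0 i).ne', sub_add_cancel]
  exact ⟨y, s, hy, hs0, hyx, hst, hq⟩

/-- Any kernel vector of the derivative of a boundary chart is a Bouligand tangent
vector of the boundary. -/
lemma aux_ker_subset_frontier [FiniteDimensional ℝ E] {k : ℕ} (S : Set E) (x : E)
    (hx : x ∈ frontier S) (U : Set E) (ψ : E → Fin k → ℝ)
    (hchart : IsBoundaryChart S x k U ψ) {v : E}
    (hv : fderiv ℝ ψ x v = 0) : v ∈ bouligandCone (frontier S) x := by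
  classical
  obtain ⟨hU, hxU, hsmooth, hsurj, heq⟩ := hchart
  set D := fderiv ℝ ψ x with hDdef
  set K := LinearMap.ker (D : E →ₗ[ℝ] (Fin k → ℝ)) with hKdef
  set P : E →L[ℝ] K := K.orthogonalProjectionOnto with hPdef
  set B : E →L[ℝ] ((Fin k → ℝ) × K) := D.prod P with hBdef
  have hPmem : ∀ u : E, ∀ hu : u ∈ K, P u = ⟨u, hu⟩ := by
    intro u hu
    exact Submodule.orthogonalProjectionOnto_mem_subspace_eq_self (⟨u, hu⟩ : K)
  have hzero : ∀ u : E, B u = 0 → u = 0 := by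
    intro u hu
    have h1 : D u = 0 := congrArg Prod.fst hu
    have h2 : P u = 0 := congrArg Prod.snd hu
    have hmem : u ∈ K := LinearMap.mem_ker.mpr h1
    rw [hPmem u hmem] at h2
    exact congrArg Subtype.val h2
  have hinj : Function.Injective B := by
    intro u u' huu'
    have : B (u - u') = 0 := by rw [map_sub, huu', sub_self]
    have := hzero _ this
    exact sub_eq_zero.mp this
  have hrange : LinearMap.range (D : E →ₗ[ℝ] (Fin k → ℝ)) = ⊤ := LinearMap.range_eq_top.mpr (hsurj x hxU)
  have hdim : Module.finrank ℝ E = Module.finrank ℝ ((Fin k → ℝ) × K) := by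
    have h1 := LinearMap.finrank_range_add_finrank_ker (D : E →ₗ[ℝ] (Fin k → ℝ))
    rw [Module.finrank_prod, Module.finrank_fin_fun]
    have h2 : LinearMap.range (D : E →ₗ[ℝ] (Fin k → ℝ)) = ⊤ :=
      LinearMap.range_eq_top.mpr (hsurj x hxU)
    have h3 : LinearMap.ker (D : E →ₗ[ℝ] (Fin k → ℝ)) = K := rfl
    rw [h2, h3, finrank_top, Module.finrank_fin_fun] at h1
    omega
  set eL : E ≃ₗ[ℝ] ((Fin k → ℝ) × K) :=
    LinearMap.linearEquivOfInjective (B : E →ₗ[ℝ] ((Fin k → ℝ) × K)) hinj hdim with heLdef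
  set A : E ≃L[ℝ] ((Fin k → ℝ) × K) := eL.toContinuousLinearEquiv with hAdef
  have hAapp : ∀ u, A u = B u := by
    intro u
    show eL.toContinuousLinearEquiv u = B u
    have hcoe := congrFun (LinearEquiv.coe_toContinuousLinearEquiv' eL) u
    rw [hcoe]
    rfl
  have hA : (A : E →L[ℝ] ((Fin k → ℝ) × K)) = B :=
    ContinuousLinearMap.ext fun u => hAapp u
  have hψat : ContDiffAt ℝ 2 ψ x := hsmooth.contDiffAt (hU.mem_nhds hxU)
  have hψs : HasStrictFDerivAt ψ D x := hψat.hasStrictFDerivAt two_ne_zero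
  set Φ : E → ((Fin k → ℝ) × K) := fun p => (ψ p, P p) with hΦdef
  have hΦ : HasStrictFDerivAt Φ (A : E →L[ℝ] ((Fin k → ℝ) × K)) x := by
    rw [hA]
    exact HasStrictFDerivAt.prodMk hψs P.hasStrictFDerivAt
  set g : ((Fin k → ℝ) × K) → E := hΦ.localInverse Φ A x with hgdef
  have hg : HasStrictFDerivAt g (A.symm : ((Fin k → ℝ) × K) →L[ℝ] E) (Φ x) :=
    hΦ.to_localInverse
  have hgx : g (Φ x) = x := hΦ.localInverse_apply_image
  have hginv : ∀ᶠ p in 𝓝 (Φ x), Φ (g p) = p := hΦ.eventually_right_inverse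
  have hgc : ContinuousAt g (Φ x) := hΦ.localInverse_continuousAt
  set vK : K := ⟨v, LinearMap.mem_ker.mpr hv⟩ with hvKdef
  set wv : (Fin k → ℝ) × K := (0, vK) with hwvdef
  have hAv : A v = wv := by
    rw [hAapp v]
    have h1 : D v = 0 := hv
    have h2 : P v = vK := hPmem v (LinearMap.mem_ker.mpr hv)
    simp [hBdef, hwvdef, h1, h2]
  have hAs : A.symm wv = v := by
    rw [← hAv]
    exact A.symm_apply_apply v
  set c : ℝ → E := fun r => g (Φ x + r • wv) with hcdef
  have hline : HasDerivAt (fun r : ℝ => Φ x + r • wv) wv 0 := by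
    simpa using ((hasDerivAt_id (0 : ℝ)).smul_const wv).const_add (Φ x)
  have hc : HasDerivAt c v 0 := by
    have h0 : HasFDerivAt g (A.symm : ((Fin k → ℝ) × K) →L[ℝ] E)
        ((fun r : ℝ => Φ x + r • wv) 0) := by
      simpa using hg.hasFDerivAt
    have := h0.comp_hasDerivAt 0 hline
    simpa [hcdef, hAs, Function.comp_def] using this
  have hslope : Tendsto (slope c 0) (𝓝[≠] 0) (𝓝 v) := hasDerivAt_iff_tendsto_slope.mp hc
  set t : ℕ → ℝ := fun i => ((i : ℝ) + 1)⁻¹ with htdef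
  have ht : ∀ i, 0 < t i := fun i => by positivity
  have ht0 : Tendsto t atTop (𝓝 0) := by
    simpa [htdef, one_div] using tendsto_one_div_add_atTop_nhds_zero_nat (𝕜 := ℝ)
  have ht0' : Tendsto t atTop (𝓝[≠] 0) :=
    tendsto_nhdsWithin_of_tendsto_nhds_of_eventually_within _ ht0
      (Eventually.of_forall fun i => (ht i).ne')
  have hpt : Tendsto (fun i => Φ x + t i • wv) atTop (𝓝 (Φ x)) := by
    have h1 : Tendsto (fun i => Φ x + t i • wv) atTop (𝓝 (Φ x + (0 : ℝ) • wv)) :=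
      tendsto_const_nhds.add (ht0.smul_const wv)
    simpa using h1
  have hev : ∀ᶠ i in atTop, Φ (g (Φ x + t i • wv)) = Φ x + t i • wv := hpt.eventually hginv
  have hgto : Tendsto (fun i => g (Φ x + t i • wv)) atTop (𝓝 x) := by
    have := hgc.tendsto.comp hpt
    rwa [hgx] at this
  have hgU : ∀ᶠ i in atTop, g (Φ x + t i • wv) ∈ U := hgto.eventually (hU.eventually_mem hxU)
  have hψx0 : ψ x = 0 := by
    have hmem : x ∈ U ∩ ψ ⁻¹' {0} := heq ▸ ⟨hxU, hx⟩
    simpa using hmem.2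
  set z : ℕ → E := fun i =>
    if Φ (g (Φ x + t i • wv)) = Φ x + t i • wv ∧ g (Φ x + t i • wv) ∈ U
    then g (Φ x + t i • wv) else x with hzdef
  have hzmem : ∀ i, z i ∈ frontier S := by
    intro i
    by_cases h : Φ (g (Φ x + t i • wv)) = Φ x + t i • wv ∧ g (Φ x + t i • wv) ∈ U
    · have hz_eq : z i = g (Φ x + t i • wv) := by
        simp only [hzdef]; exact if_pos h
      rw [hz_eq]
      have hψz : ψ (g (Φ x + t i • wv)) = 0 := by
        have h1 := congrArg Prod.fst h.1
        simpa [hΦdef, hwvdef, hψx0] using h1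
      have hmem : g (Φ x + t i • wv) ∈ U ∩ ψ ⁻¹' {0} := ⟨h.2, by simpa using hψz⟩
      rw [← heq] at hmem
      exact hmem.2
    · have hz_eq : z i = x := by
        simp only [hzdef]; exact if_neg h
      rw [hz_eq]
      exact hx
  have hevz : ∀ᶠ i in atTop, z i = g (Φ x + t i • wv) := by
    filter_upwards [hev, hgU] with i h1 h2
    simp only [hzdef]
    exact if_pos ⟨h1, h2⟩
  have hzx : Tendsto z atTop (𝓝 x) :=
    Tendsto.congr' (hevz.mono fun i h => h.symm) hgto
  have hc0 : c 0 = x := by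
    simp only [hcdef, zero_smul, add_zero]
    exact hgx
  have hzq : Tendsto (fun i => (t i)⁻¹ • (z i - x)) atTop (𝓝 v) := by
    refine Tendsto.congr' ?_ (hslope.comp ht0')
    filter_upwards [hevz] with i h
    show slope c 0 (t i) = (t i)⁻¹ • (z i - x)
    simp only [slope, vsub_eq_sub, sub_zero]
    rw [hc0, h]
  exact ⟨z, t, hzmem, ht, hzx, ht0, hzq⟩

theorem bouligand_inter_bouligand_compl_eq_tangent [FiniteDimensional ℝ E]
    (S : Set E) (hS : IsClosed S) (hpr : ProxRegular S)
    (hbd : BoundaryC2Submanifold S)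
    (x : E) (hx : x ∈ frontier S)
    (k : ℕ) (U : Set E) (ψ : E → (Fin k → ℝ))
    (hchart : IsBoundaryChart S x k U ψ) :
    bouligandCone S x ∩ bouligandCone (Sᶜ ∪ frontier S) x =
      (LinearMap.ker (fderiv ℝ ψ x : E →ₗ[ℝ] (Fin k → ℝ)) : Set E) := by
  obtain ⟨hU, hxU, hsmooth, hsurj, heq⟩ := hchart
  have hψat : HasFDerivAt ψ (fderiv ℝ ψ x) x := by
    have h1 : ContDiffAt ℝ 2 ψ x := hsmooth.contDiffAt (hU.mem_nhds hxU)
    exact (h1.differentiableAt (by norm_num)).hasFDerivAt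
  have hzero : ∀ y ∈ U ∩ frontier S, ψ y = 0 := by
    intro y hy
    rw [heq] at hy
    simpa using hy.2
  apply Set.Subset.antisymm
  · intro v hv
    have hfr : v ∈ bouligandCone (frontier S) x := aux_inter_subset_frontier S hS x hv
    have h0 : fderiv ℝ ψ x v = 0 :=
      aux_mem_ker_of_bouligand hU hxU hψat hzero hx hfr
    exact LinearMap.mem_ker.mpr h0
  · intro v hv
    have hv' : fderiv ℝ ψ x v = 0 := hv
    obtain ⟨z, t, hz, ht, hzx, ht0, hzq⟩ :=
      aux_ker_subset_frontier S x hx U ψ ⟨hU, hxU, hsmooth, hsurj, heq⟩ hv'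
    exact ⟨⟨z, t, fun i => hS.frontier_subset (hz i), ht, hzx, ht0, hzq⟩,
      ⟨z, t, fun i => Or.inr (hz i), ht, hzx, ht0, hzq⟩⟩
end

section
/- Let S ⊆ E be a closed φ-convex set for a continuous φ : S → [0,∞), let x₁ ∈ E \ S, and let s₁ ∈ S be a nearest point of S to x₁ (so ‖x₁ − s₁‖ = dist(x₁, S)). Let r > 0 and ρ ≥ 0 satisfy ‖x₁ − s₁‖ ≤ r, φ(s₁) ≤ ρ and 2ρr < 1, and let U be a neighborhood of s₁ on which the φ-convexity inequality at s₁ holds. Then for every s ∈ S ∩ U one has the quadratic growth estimate ‖x₁ − s‖² ≥ ‖x₁ − s₁‖² + (1 − 2ρr)‖s − s₁‖². -/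
open Filter Topology Metric Set
open scoped RealInnerProductSpace NNReal

variable {E : Type*} [NormedAddCommGroup E] [InnerProductSpace ℝ E]

theorem quadratic_growth_of_phiConvex [FiniteDimensional ℝ E]
    (S : Set E) (hS : IsClosed S) (φ : E → ℝ) (hφ : IsPhiConvex S φ)
    (x₁ : E) (hx₁ : x₁ ∉ S) (s₁ : E) (hs₁ : s₁ ∈ S)
    (hnear : ‖x₁ - s₁‖ = infDist x₁ S)
    (r ρ : ℝ) (hr : 0 < r) (hρ : 0 ≤ ρ)
    (hdist : ‖x₁ - s₁‖ ≤ r) (hφρ : φ s₁ ≤ ρ) (hsmall : 2 * ρ * r < 1)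
    (U : Set E) (hU : U ∈ 𝓝 s₁)
    (hineq : ∀ ξ ∈ proxNormalCone S s₁, ∀ y ∈ S ∩ U,
      ⟪ξ, y - s₁⟫ ≤ φ s₁ * ‖ξ‖ * ‖y - s₁‖ ^ 2) :
    ∀ s ∈ S ∩ U, ‖x₁ - s₁‖ ^ 2 + (1 - 2 * ρ * r) * ‖s - s₁‖ ^ 2 ≤ ‖x₁ - s‖ ^ 2 := by
  have hξ : (x₁ - s₁) ∈ proxNormalCone S s₁ := by
    refine ⟨1, one_pos, Set.univ, Filter.univ_mem, ?_⟩
    rintro y ⟨hyS, -⟩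
    have h1 : ‖x₁ - s₁‖ ≤ ‖x₁ - y‖ := by
      rw [hnear, show ‖x₁ - y‖ = dist x₁ y from (dist_eq_norm _ _).symm]
      exact infDist_le_dist_of_mem hyS
    have h2 : ‖x₁ - y‖ ^ 2 = ‖x₁ - s₁‖ ^ 2 - 2 * ⟪x₁ - s₁, y - s₁⟫ + ‖y - s₁‖ ^ 2 := by
      have : x₁ - y = (x₁ - s₁) - (y - s₁) := by abel
      rw [this, @norm_sub_sq_real]
    nlinarith [norm_nonneg (x₁ - s₁), norm_nonneg (x₁ - y)]
  intro s hs
  have key := hineq _ hξ s hs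
  have hbound : ⟪x₁ - s₁, s - s₁⟫ ≤ ρ * r * ‖s - s₁‖ ^ 2 := by
    have h0 : 0 ≤ φ s₁ := hφ.2.1 s₁ hs₁
    have h1 : 0 ≤ ‖x₁ - s₁‖ := norm_nonneg _
    have hm : φ s₁ * ‖x₁ - s₁‖ ≤ ρ * r := mul_le_mul hφρ hdist h1 hρ
    nlinarith [sq_nonneg ‖s - s₁‖]
  have h2 : ‖x₁ - s‖ ^ 2 = ‖x₁ - s₁‖ ^ 2 - 2 * ⟪x₁ - s₁, s - s₁⟫ + ‖s - s₁‖ ^ 2 := by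
    have : x₁ - s = (x₁ - s₁) - (s - s₁) := by abel
    rw [this, @norm_sub_sq_real]
  nlinarith
end

section
/- Let S ⊆ E be a closed prox-regular set whose boundary ∂S is a C² embedded submanifold of E, let x ∈ ∂S, and let v ∈ (T^B_S(x) \ T_x∂S) ∪ {0}. Then there exists ε > 0 such that x + tv ∈ S for all t ∈ [0, ε). -/
open Filter Topology Metric Set
open scoped RealInnerProductSpace NNReal

variable {E : Type*} [NormedAddCommGroup E] [InnerProductSpace ℝ E]

/-- The complement of the frontier is contained in the union of the interior and the
complement of the closure. -/
lemma compl_frontier_subset_aux {α : Type*} [TopologicalSpace α] (S : Set α) :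
    (frontier S)ᶜ ⊆ interior S ∪ (closure S)ᶜ := by
  intro y hy
  by_cases h : y ∈ closure S
  · left; by_contra h2; exact hy ⟨h, h2⟩
  · exact Or.inr h

/-- A preconnected set avoiding the frontier of `S` lies in the interior of `S`
or in the complement of its closure. -/
lemma preconnected_dichotomy_aux {α : Type*} [TopologicalSpace α] {S s : Set α}
    (hs : IsPreconnected s) (hfr : ∀ y ∈ s, y ∉ frontier S) :
    s ⊆ interior S ∨ s ⊆ (closure S)ᶜ := by
  refine hs.subset_or_subset isOpen_interior isClosed_closure.isOpen_compl ?_ ?_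
  · exact disjoint_compl_right.mono_left (interior_subset.trans subset_closure)
  · exact fun y hy => compl_frontier_subset_aux S (hfr y hy)

/-- A preconnected set meeting both `S` and its complement meets the frontier of `S`. -/
lemma crossing_aux {α : Type*} [TopologicalSpace α] {S s : Set α} {a b : α}
    (hs : IsPreconnected s) (ha : a ∈ s) (haS : a ∈ S) (hb : b ∈ s) (hbS : b ∉ S) :
    ∃ w, w ∈ s ∧ w ∈ frontier S := by
  by_contra h
  push_neg at h
  rcases preconnected_dichotomy_aux hs h with h2 | h2
  · exact hbS (interior_subset (h2 hb))
  · exact (h2 ha) (subset_closure haS)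

/-- A point of a segment is at most as far from one endpoint as the other endpoint. -/
lemma seg_bound_aux {F : Type*} [NormedAddCommGroup F] [NormedSpace ℝ F]
    {z q w : F} (h : w ∈ segment ℝ z q) : ‖w - q‖ ≤ ‖z - q‖ := by
  obtain ⟨a, b, ha, hb, hab, rfl⟩ := h
  have : a • z + b • q - q = a • (z - q) := by
    rw [show b = 1 - a by linarith]
    module
  rw [this, norm_smul, Real.norm_eq_abs, abs_of_nonneg ha]
  nlinarith [norm_nonneg (z - q)]

set_option maxHeartbeats 1000000 in
theorem segment_mem_of_bouligand_not_tangent [FiniteDimensional ℝ E]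
    (S : Set E) (hS : IsClosed S) (hpr : ProxRegular S)
    (hbd : BoundaryC2Submanifold S)
    (x : E) (hx : x ∈ frontier S)
    (k : ℕ) (U : Set E) (ψ : E → (Fin k → ℝ))
    (hchart : IsBoundaryChart S x k U ψ)
    (v : E)
    (hv : v ∈ (bouligandCone S x \ (LinearMap.ker (fderiv ℝ ψ x : E →ₗ[ℝ] (Fin k → ℝ)) : Set E)) ∪ {0}) :
    ∃ ε : ℝ, 0 < ε ∧ ∀ t ∈ Ico (0:ℝ) ε, x + t • v ∈ S := by
  classical
  obtain ⟨hUo, hxU, hψ, hsurj, hchartEq⟩ := hchart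
  have hxS : x ∈ S := hS.frontier_subset hx
  rcases hv with hv | hv
  swap
  · -- v = 0
    simp only [Set.mem_singleton_iff] at hv
    exact ⟨1, one_pos, fun t _ => by simp [hv, hxS]⟩
  obtain ⟨hvB, hvker⟩ := hv
  set f := fderiv ℝ ψ x with hfdef
  have hfv : f v ≠ 0 := by
    intro h
    exact hvker (by simpa [SetLike.mem_coe, LinearMap.mem_ker] using h)
  have hψx : HasFDerivAt ψ f x :=
    ((hψ.contDiffAt (hUo.mem_nhds hxU)).differentiableAt (by norm_num)).hasFDerivAt
  have hψx0 : ψ x = 0 := by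
    have hx2 : x ∈ U ∩ ψ ⁻¹' {0} := hchartEq ▸ ⟨hxU, hx⟩
    simpa using hx2.2
  -- Step A: for small positive t the point x + t v lies in U and off the frontier
  obtain ⟨ε₀, hε₀, hA⟩ : ∃ ε₀ > 0, ∀ t ∈ Ioo (0:ℝ) ε₀, x + t • v ∈ U ∧ ψ (x + t • v) ≠ 0 := by
    have hcurve : HasDerivAt (fun t : ℝ => x + t • v) v 0 := by
      simpa using ((hasDerivAt_id (0:ℝ)).smul_const v).const_add x
    have hg : HasDerivAt (fun t : ℝ => ψ (x + t • v)) (f v) 0 := by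
      have h0 : HasFDerivAt ψ f (x + (0:ℝ) • v) := by simpa using hψx
      exact h0.comp_hasDerivAt 0 hcurve
    have hslope := hasDerivAt_iff_tendsto_slope.mp hg
    have h1 : ∀ᶠ t in 𝓝[≠] (0:ℝ), slope (fun t : ℝ => ψ (x + t • v)) 0 t ≠ 0 :=
      hslope.eventually_ne hfv
    have h2 : ∀ᶠ t in 𝓝[>] (0:ℝ), ψ (x + t • v) ≠ 0 := by
      have := nhdsWithin_mono (0:ℝ) (fun t (ht : t ∈ Ioi 0) => ne_of_gt ht) h1
      filter_upwards [this] with t ht hψt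
      apply ht
      simp [slope, hψt, hψx0]
    have h3 : ∀ᶠ t in 𝓝[>] (0:ℝ), x + t • v ∈ U := by
      have hc : Tendsto (fun t : ℝ => x + t • v) (𝓝[>] 0) (𝓝 x) := by
        have : Tendsto (fun t : ℝ => x + t • v) (𝓝 0) (𝓝 x) := by
          simpa using hcurve.continuousAt.tendsto
        exact this.mono_left nhdsWithin_le_nhds
      exact hc.eventually_mem (hUo.mem_nhds hxU)
    obtain ⟨u, hu, hsub⟩ := mem_nhdsGT_iff_exists_Ioo_subset.mp (h3.and h2)
    exact ⟨u, hu, fun t ht => hsub ht⟩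
  have hAfr : ∀ t ∈ Ioo (0:ℝ) ε₀, x + t • v ∉ frontier S := by
    intro t ht hmem
    have h1 : x + t • v ∈ U ∩ ψ ⁻¹' {0} := hchartEq ▸ ⟨(hA t ht).1, hmem⟩
    exact (hA t ht).2 (by simpa using h1.2)
  -- Dichotomy via connectedness of the open segment
  have hdich := preconnected_dichotomy_aux (S := S)
      (s := (fun t : ℝ => x + t • v) '' Ioo 0 ε₀)
      (isPreconnected_Ioo.image _
        (Continuous.continuousOn (by continuity)))
      (by rintro y ⟨t, ht, rfl⟩; exact hAfr t ht)
  rcases hdich with hcase | hcase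
  · -- segment in the interior of S : done
    refine ⟨ε₀, hε₀, fun t ht => ?_⟩
    rcases eq_or_lt_of_le ht.1 with h0 | h0
    · simp [← h0, hxS]
    · exact interior_subset (hcase ⟨t, ⟨h0, ht.2⟩, rfl⟩)
  · -- segment outside S : contradiction with the Bouligand cone condition
    exfalso
    have hcase' : ∀ t ∈ Ioo (0:ℝ) ε₀, x + t • v ∉ S := by
      intro t ht hmem
      exact hcase ⟨t, ht, rfl⟩ (subset_closure hmem)
    obtain ⟨z, t, hzS, htpos, hz, ht, hlim⟩ := hvB
    set q : ℕ → E := fun i => x + t i • v with hqdef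
    have htev : ∀ᶠ i in atTop, t i < ε₀ := ht.eventually (eventually_lt_nhds hε₀)
    have hqnot : ∀ᶠ i in atTop, q i ∉ S := by
      filter_upwards [htev] with i hi
      exact hcase' (t i) ⟨htpos i, hi⟩
    -- a boundary point on the segment from z i to q i
    have hex : ∀ᶠ i in atTop, ∃ w, w ∈ segment ℝ (z i) (q i) ∧ w ∈ frontier S := by
      filter_upwards [hqnot] with i hqi
      obtain ⟨w, hw1, hw2⟩ := crossing_aux (convex_segment (z i) (q i)).isPreconnected
        (left_mem_segment ℝ (z i) (q i)) (hzS i) (right_mem_segment ℝ (z i) (q i)) hqi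
      exact ⟨w, hw1, hw2⟩
    set w : ℕ → E := fun i =>
      if h : ∃ w, w ∈ segment ℝ (z i) (q i) ∧ w ∈ frontier S then h.choose else x with hwdef
    have hw : ∀ᶠ i in atTop, w i ∈ segment ℝ (z i) (q i) ∧ w i ∈ frontier S := by
      filter_upwards [hex] with i hi
      simpa [hwdef, dif_pos hi] using hi.choose_spec
    set e : ℕ → ℝ := fun i => ‖(t i)⁻¹ • (z i - x) - v‖ with hedef
    have he : Tendsto e atTop (𝓝 0) := by
      have := tendsto_iff_norm_sub_tendsto_zero.mp hlim
      simpa [hedef] using this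
    have hzq : ∀ i, ‖z i - q i‖ = t i * e i := by
      intro i
      have hti := (htpos i).ne'
      have : z i - q i = t i • ((t i)⁻¹ • (z i - x) - v) := by
        rw [smul_sub, smul_smul, mul_inv_cancel₀ hti, one_smul, hqdef]
        simp only [sub_add_eq_sub_sub]
      rw [this, norm_smul, Real.norm_eq_abs, abs_of_pos (htpos i)]
    have hwq : ∀ᶠ i in atTop, ‖w i - q i‖ ≤ t i * e i := by
      filter_upwards [hw] with i hi
      calc ‖w i - q i‖ ≤ ‖z i - q i‖ := seg_bound_aux hi.1
        _ = t i * e i := hzq i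
    have hwx : ∀ᶠ i in atTop, ‖w i - x‖ ≤ t i * (e i + ‖v‖) := by
      filter_upwards [hwq] with i hi
      have : w i - x = (w i - q i) + t i • v := by simp [hqdef]; abel
      rw [this]
      calc ‖(w i - q i) + t i • v‖ ≤ ‖w i - q i‖ + ‖t i • v‖ := norm_add_le _ _
        _ ≤ t i * e i + t i * ‖v‖ := by
            rw [norm_smul, Real.norm_eq_abs, abs_of_pos (htpos i)]
            linarith
        _ = t i * (e i + ‖v‖) := by ring
    have hbound0 : Tendsto (fun i => t i * (e i + ‖v‖)) atTop (𝓝 0) := by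
      have := ht.mul (he.add (tendsto_const_nhds (x := ‖v‖)))
      simpa using this
    have hwtend : Tendsto w atTop (𝓝 x) := by
      rw [tendsto_iff_norm_sub_tendsto_zero]
      exact squeeze_zero' (Eventually.of_forall fun i => norm_nonneg _) hwx hbound0
    have hwU : ∀ᶠ i in atTop, ψ (w i) = 0 := by
      filter_upwards [hwtend.eventually_mem (hUo.mem_nhds hxU), hw] with i h1 h2
      have : w i ∈ U ∩ ψ ⁻¹' {0} := hchartEq ▸ ⟨h1, h2.2⟩
      simpa using this.2
    set hseq : ℕ → E := fun i => (t i)⁻¹ • (w i - x) with hhdef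
    have hhv : ∀ᶠ i in atTop, ‖hseq i - v‖ ≤ e i := by
      filter_upwards [hwq] with i hi
      have hti := (htpos i).ne'
      have h1 : hseq i - v = (t i)⁻¹ • (w i - q i) := by
        have h2 : w i - q i = (w i - x) - t i • v := by
          simp only [hqdef]; abel
        rw [h2, smul_sub, smul_smul, inv_mul_cancel₀ hti, one_smul]
      rw [h1, norm_smul, Real.norm_eq_abs, abs_of_pos (inv_pos.mpr (htpos i))]
      calc (t i)⁻¹ * ‖w i - q i‖ ≤ (t i)⁻¹ * (t i * e i) := by
            exact mul_le_mul_of_nonneg_left hi (le_of_lt (inv_pos.mpr (htpos i)))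
        _ = e i := by field_simp
    have hhtend : Tendsto hseq atTop (𝓝 v) := by
      rw [tendsto_iff_norm_sub_tendsto_zero]
      exact squeeze_zero' (Eventually.of_forall fun i => norm_nonneg _) hhv he
    have hftend : Tendsto (fun i => f (hseq i)) atTop (𝓝 (f v)) :=
      (f.continuous.tendsto v).comp hhtend
    -- for every c > 0, ‖f v‖ ≤ c * (‖v‖ + 1)
    have key : ∀ c : ℝ, 0 < c → ‖f v‖ ≤ c * (‖v‖ + 1) := by
      intro c hc
      have hlo := hψx.isLittleO
      have hev : ∀ᶠ y in 𝓝 x, ‖ψ y - ψ x - f (y - x)‖ ≤ c * ‖y - x‖ := hlo.def hc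
      have hevseq := hwtend.eventually hev
      have he1 : ∀ᶠ i in atTop, e i ≤ 1 :=
        he.eventually_le_const (show (0:ℝ) < 1 by norm_num)
      have hfin : ∀ᶠ i in atTop, ‖f (hseq i)‖ ≤ c * (‖v‖ + 1) := by
        filter_upwards [hevseq, hwU, hwx, he1] with i h1 h2 h3 h4
        have hti := (htpos i).ne'
        have hb : ‖f (w i - x)‖ ≤ c * ‖w i - x‖ := by
          have : ψ (w i) - ψ x - f (w i - x) = -(f (w i - x)) := by
            rw [h2, hψx0]; abel
          rw [this, norm_neg] at h1
          exact h1
        have : ‖f (hseq i)‖ = (t i)⁻¹ * ‖f (w i - x)‖ := by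
          rw [hhdef]
          simp only [map_smul]
          rw [norm_smul, Real.norm_eq_abs, abs_of_pos (inv_pos.mpr (htpos i))]
        rw [this]
        have hei : (0:ℝ) ≤ e i := norm_nonneg _
        calc (t i)⁻¹ * ‖f (w i - x)‖ ≤ (t i)⁻¹ * (c * (t i * (e i + ‖v‖))) := by
              apply mul_le_mul_of_nonneg_left _ (le_of_lt (inv_pos.mpr (htpos i)))
              calc ‖f (w i - x)‖ ≤ c * ‖w i - x‖ := hb
                _ ≤ c * (t i * (e i + ‖v‖)) := mul_le_mul_of_nonneg_left h3 (le_of_lt hc)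
          _ = c * (e i + ‖v‖) := by field_simp
          _ ≤ c * (‖v‖ + 1) := by nlinarith
      exact le_of_tendsto hftend.norm hfin
    -- conclude f v = 0, contradiction
    have hpos : (0:ℝ) < ‖f v‖ := norm_pos_iff.mpr hfv
    have hM : (0:ℝ) < ‖v‖ + 1 := by positivity
    have h2 := key (‖f v‖ / (2 * (‖v‖ + 1))) (by positivity)
    have h3 : ‖f v‖ / (2 * (‖v‖ + 1)) * (‖v‖ + 1) = ‖f v‖ / 2 := by
      rw [div_mul_eq_mul_div, mul_comm (2:ℝ) (‖v‖ + 1), ← div_div,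
        mul_div_assoc, div_self hM.ne', mul_one]
    rw [h3] at h2
    linarith
end

section
/- Let C = ([0,1] × {0}) ∪ (K × [0,1]) ∪ ({0} × [0,1]) ⊆ ℝ² be the comb space, where K = {1/n : n ∈ ℕ, n ≥ 1}. Then for every x ∈ {0} × [0,1] and every r > 0 there exists a point z ∈ ℝ² with ‖z − x‖ < r that has at least two distinct nearest points in C; consequently reach(C, x) = 0 for every x ∈ {0} × [0,1]. -/
open Metric Set

noncomputable section

/-- The set of points of the plane having a unique nearest point in `A`. -/
def Unp (A : Set (EuclideanSpace ℝ (Fin 2))) : Set (EuclideanSpace ℝ (Fin 2)) :=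
  {z | ∃! a : EuclideanSpace ℝ (Fin 2), a ∈ A ∧ dist z a = infDist z A}

/-- reach(A, x) = sup {r ≥ 0 : B(x,r) ⊆ Unp(A)}. -/
def reach (A : Set (EuclideanSpace ℝ (Fin 2))) (x : EuclideanSpace ℝ (Fin 2)) : ℝ :=
  sSup {r : ℝ | 0 ≤ r ∧ ball x r ⊆ Unp A}

/-- The comb space ([0,1] × {0}) ∪ (K × [0,1]) ∪ ({0} × [0,1]) with K = {1/n : n ≥ 1}. -/
def combSpace : Set (EuclideanSpace ℝ (Fin 2)) :=
  {p | (p 0 ∈ Icc (0:ℝ) 1 ∧ p 1 = 0) ∨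
       ((∃ n : ℕ, 1 ≤ n ∧ p 0 = 1 / (n : ℝ)) ∧ p 1 ∈ Icc (0:ℝ) 1) ∨
       (p 0 = 0 ∧ p 1 ∈ Icc (0:ℝ) 1)}

lemma norm_eq2 (w : EuclideanSpace ℝ (Fin 2)) : ‖w‖ = Real.sqrt ((w 0)^2 + (w 1)^2) := by
  rw [EuclideanSpace.norm_eq, Fin.sum_univ_two]
  simp [Real.norm_eq_abs, sq_abs]

lemma abs_coord_le_norm (v : EuclideanSpace ℝ (Fin 2)) (i : Fin 2) : |v i| ≤ ‖v‖ := by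
  rw [norm_eq2, ← Real.sqrt_sq (abs_nonneg (v i))]
  apply Real.sqrt_le_sqrt
  fin_cases i <;> simp <;> nlinarith [sq_abs (v 0), sq_abs (v 1), sq_nonneg (v 0), sq_nonneg (v 1)]

lemma norm_le_sum (v : EuclideanSpace ℝ (Fin 2)) : ‖v‖ ≤ |v 0| + |v 1| := by
  rw [norm_eq2, ← Real.sqrt_sq (by positivity : (0:ℝ) ≤ |v 0| + |v 1|)]
  apply Real.sqrt_le_sqrt
  have := abs_nonneg (v 0); have := abs_nonneg (v 1)
  nlinarith [sq_abs (v 0), sq_abs (v 1)]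

lemma key (x : EuclideanSpace ℝ (Fin 2)) (hx0 : x 0 = 0) (hx1 : x 1 ∈ Icc (0:ℝ) 1)
    (r : ℝ) (hr : 0 < r) : ∃ z : EuclideanSpace ℝ (Fin 2), ‖z - x‖ < r ∧
      ∃ c₁ c₂ : EuclideanSpace ℝ (Fin 2), c₁ ∈ combSpace ∧ c₂ ∈ combSpace ∧ c₁ ≠ c₂ ∧
        ‖z - c₁‖ = infDist z combSpace ∧ ‖z - c₂‖ = infDist z combSpace := by
  obtain ⟨m, hm⟩ := exists_nat_gt (2 / r)
  have hM1 : (1:ℝ) ≤ (m:ℝ) := by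
    have : (0:ℝ) < 2 / r := by positivity
    have : (1:ℝ) ≤ (m:ℝ) := by
      by_contra h
      push_neg at h
      have : m = 0 := by exact_mod_cast Nat.lt_one_iff.mp (by exact_mod_cast h)
      simp [this] at hm; linarith
    exact this
  set M : ℝ := (m : ℝ) with hMdef
  have hM0 : 0 < M := lt_of_lt_of_le one_pos hM1
  have hM0' : 0 < M + 1 := by linarith
  set a : ℝ := (1/M + 1/(M+1)) / 2 with ha
  set d : ℝ := (1/M - 1/(M+1)) / 2 with hd
  have hgap : 1/(M+1) < 1/M := by
    apply one_div_lt_one_div_of_lt hM0; linarith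
  have hd0 : 0 < d := by rw [hd]; linarith
  have had : a - d = 1/(M+1) := by rw [ha, hd]; ring
  have had' : a + d = 1/M := by rw [ha, hd]; ring
  have hd1 : d ≤ 1 := by
    have h1 : 1/M ≤ 1 := by
      rw [div_le_one hM0]; exact hM1
    have h2 : 0 < 1/(M+1) := by positivity
    rw [hd]; linarith
  obtain ⟨hx1a, hx1b⟩ := hx1
  set y : ℝ := max (x 1) d with hy
  have hyd : d ≤ y := le_max_right _ _
  have hy0 : 0 ≤ y := le_trans hd0.le hyd
  have hy1 : y ≤ 1 := max_le hx1b hd1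
  set z : EuclideanSpace ℝ (Fin 2) := !₂[a, y] with hz
  set c₁ : EuclideanSpace ℝ (Fin 2) := !₂[1/M, y] with hc₁
  set c₂ : EuclideanSpace ℝ (Fin 2) := !₂[1/(M+1), y] with hc₂
  have hz0 : z 0 = a := rfl
  have hz1 : z 1 = y := rfl
  have hc₁0 : c₁ 0 = 1/M := rfl
  have hc₁1 : c₁ 1 = y := rfl
  have hc₂0 : c₂ 0 = 1/(M+1) := rfl
  have hc₂1 : c₂ 1 = y := rfl
  have hm1 : 1 ≤ m := by
    have := hM1; rw [hMdef] at this; exact_mod_cast this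
  have hc₁mem : c₁ ∈ combSpace := by
    refine Or.inr (Or.inl ⟨⟨m, hm1, hc₁0⟩, hc₁1 ▸ ⟨hy0, hy1⟩⟩)
  have hc₂mem : c₂ ∈ combSpace := by
    refine Or.inr (Or.inl ⟨⟨m + 1, by omega, ?_⟩, hc₂1 ▸ ⟨hy0, hy1⟩⟩)
    rw [hc₂0]; push_cast; ring_nf; rfl
  have hne : c₁ ≠ c₂ := by
    intro h
    have : c₁ 0 = c₂ 0 := by rw [h]
    rw [hc₁0, hc₂0] at this
    exact absurd this (ne_of_gt hgap)
  have hnorm1 : ‖z - c₁‖ = d := by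
    rw [norm_eq2]
    have e0 : (z - c₁) 0 = -d := by
      simp only [PiLp.sub_apply, hz0, hc₁0]; linarith
    have e1 : (z - c₁) 1 = 0 := by
      simp only [PiLp.sub_apply, hz1, hc₁1]; ring
    rw [e0, e1]
    rw [show (-d)^2 + (0:ℝ)^2 = d^2 by ring, Real.sqrt_sq hd0.le]
  have hnorm2 : ‖z - c₂‖ = d := by
    rw [norm_eq2]
    have e0 : (z - c₂) 0 = d := by
      simp only [PiLp.sub_apply, hz0, hc₂0]; linarith
    have e1 : (z - c₂) 1 = 0 := by
      simp only [PiLp.sub_apply, hz1, hc₂1]; ring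
    rw [e0, e1]
    rw [show d^2 + (0:ℝ)^2 = d^2 by ring, Real.sqrt_sq hd0.le]
  -- lower bound on distance to any point of the comb
  have hlb : ∀ c ∈ combSpace, d ≤ dist z c := by
    intro c hc
    rw [dist_eq_norm]
    rcases hc with ⟨_, hcy⟩ | ⟨⟨k, hk1, hck⟩, _⟩ | ⟨hcx, _⟩
    · -- base: second coordinate
      calc d ≤ y := hyd
        _ = |(z - c) 1| := by
            simp only [PiLp.sub_apply, hz1, hcy, sub_zero]; rw [abs_of_nonneg hy0]
        _ ≤ ‖z - c‖ := abs_coord_le_norm _ 1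
    · -- tooth at 1/k
      have hk0 : (0:ℝ) < (k:ℝ) := by exact_mod_cast hk1
      have : d ≤ |a - 1/(k:ℝ)| := by
        rcases le_or_gt k m with h | h
        · have : 1/M ≤ 1/(k:ℝ) := by
            apply one_div_le_one_div_of_le hk0; rw [hMdef]; exact_mod_cast h
          rw [abs_sub_comm, abs_of_nonneg (by linarith)]
          linarith
        · have hk' : (M+1) ≤ (k:ℝ) := by
            rw [hMdef]; push_cast; exact_mod_cast Nat.succ_le_of_lt h
          have : 1/(k:ℝ) ≤ 1/(M+1) := by
            apply one_div_le_one_div_of_le hM0' hk'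
          rw [abs_of_nonneg (by linarith)]
          linarith
      calc d ≤ |a - 1/(k:ℝ)| := this
        _ = |(z - c) 0| := by simp only [PiLp.sub_apply, hz0, hck]
        _ ≤ ‖z - c‖ := abs_coord_le_norm _ 0
    · -- left segment
      have h2 : 0 < 1/(M+1) := by positivity
      calc d ≤ a := by linarith
        _ = |(z - c) 0| := by
            simp only [PiLp.sub_apply, hz0, hcx, sub_zero]
            rw [abs_of_nonneg (by linarith)]
        _ ≤ ‖z - c‖ := abs_coord_le_norm _ 0
  have hinf : infDist z combSpace = d := by
    apply le_antisymm
    · calc infDist z combSpace ≤ dist z c₁ := infDist_le_dist_of_mem hc₁mem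
        _ = d := by rw [dist_eq_norm, hnorm1]
    · by_contra hcon
      push_neg at hcon
      rw [infDist_lt_iff ⟨c₁, hc₁mem⟩] at hcon
      obtain ⟨c, hc, hlt⟩ := hcon
      exact absurd (hlb c hc) (not_le.mpr hlt)
  refine ⟨z, ?_, c₁, c₂, hc₁mem, hc₂mem, hne, by rw [hnorm1, hinf], by rw [hnorm2, hinf]⟩
  -- ‖z - x‖ < r
  have h0 : |(z - x) 0| = a := by
    simp only [PiLp.sub_apply, hz0, hx0, sub_zero]
    rw [abs_of_nonneg (by positivity : (0:ℝ) ≤ a)]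
  have h1 : |(z - x) 1| ≤ d := by
    simp only [PiLp.sub_apply, hz1]
    rcases le_or_gt d (x 1) with h | h
    · rw [hy, max_eq_left h]; simp [hd0.le]
    · rw [hy, max_eq_right h.le, abs_of_nonneg (by linarith)]; linarith
  have hMr : 1/M < r/2 := by
    rw [div_lt_div_iff₀ hM0 two_pos]
    have : 2/r < M := hm
    rw [div_lt_iff₀ hr] at this
    linarith
  calc ‖z - x‖ ≤ |(z - x) 0| + |(z - x) 1| := norm_le_sum _
    _ ≤ a + d := by rw [h0]; linarith
    _ = 1/M := had'
    _ < r/2 := hMr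
    _ < r := by linarith

theorem comb_space_reach_zero (x : EuclideanSpace ℝ (Fin 2))
    (hx0 : x 0 = 0) (hx1 : x 1 ∈ Icc (0:ℝ) 1) :
    (∀ r : ℝ, 0 < r → ∃ z : EuclideanSpace ℝ (Fin 2), ‖z - x‖ < r ∧
      ∃ c₁ c₂ : EuclideanSpace ℝ (Fin 2), c₁ ∈ combSpace ∧ c₂ ∈ combSpace ∧ c₁ ≠ c₂ ∧
        ‖z - c₁‖ = infDist z combSpace ∧ ‖z - c₂‖ = infDist z combSpace) ∧
    reach combSpace x = 0 := by
  refine ⟨fun r hr => key x hx0 hx1 r hr, ?_⟩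
  have hset : {r : ℝ | 0 ≤ r ∧ ball x r ⊆ Unp combSpace} = {0} := by
    ext r
    simp only [mem_setOf_eq, mem_singleton_iff]
    constructor
    · rintro ⟨hr0, hball⟩
      by_contra hne
      have hr : 0 < r := lt_of_le_of_ne hr0 (Ne.symm hne)
      obtain ⟨z, hz, c₁, c₂, hc₁, hc₂, hcc, h1, h2⟩ := key x hx0 hx1 r hr
      have hzball : z ∈ ball x r := by
        rw [mem_ball, dist_eq_norm]; exact hz
      obtain ⟨w, _, hw⟩ := hball hzball
      have e1 : c₁ = w := hw c₁ ⟨hc₁, by rw [dist_eq_norm]; exact h1⟩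
      have e2 : c₂ = w := hw c₂ ⟨hc₂, by rw [dist_eq_norm]; exact h2⟩
      exact hcc (e1.trans e2.symm)
    · rintro rfl
      exact ⟨le_refl 0, by rw [ball_zero]; exact empty_subset _⟩
  rw [reach, hset, csSup_singleton]
end
end
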